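/- arXiv:0705.4498 — 8 statements merged into one kernel-verified Lean document; each statement's English description precedes it below -/
import Mathlib

section
/- In the semigroup F_θ⁺, if u, u' are words in the e-generators with |u| = |u'|, v, v' are words in the f-generators with |v| = |v'|, and e_u f_v = e_{u'} f_{v'} in F_θ⁺, then u = u' and v = v'. (Unique factorization with all e's first.) -/
inductive TwoGraphGen (I J : Type) : Type
  | e : I → TwoGraphGen I J
  | f : J → TwoGraphGen I J

def twoGraphRel {I J : Type} (θ : Equiv.Perm (I × J)) :
    FreeMonoid (TwoGraphGen I J) → FreeMonoid (TwoGraphGen I J) → Prop :=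
  fun a b => ∃ i j,
    a = FreeMonoid.of (TwoGraphGen.e i) * FreeMonoid.of (TwoGraphGen.f j) ∧
    b = FreeMonoid.of (TwoGraphGen.f (θ (i, j)).2) * FreeMonoid.of (TwoGraphGen.e (θ (i, j)).1)

def FTheta {I J : Type} (θ : Equiv.Perm (I × J)) : Type :=
  (conGen (twoGraphRel θ)).Quotient

instance {I J : Type} (θ : Equiv.Perm (I × J)) : Monoid (FTheta θ) :=
  inferInstanceAs (Monoid (conGen (twoGraphRel θ)).Quotient)

def FTheta.E {I J : Type} (θ : Equiv.Perm (I × J)) (i : I) : FTheta θ :=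
  (conGen (twoGraphRel θ)).mk' (FreeMonoid.of (TwoGraphGen.e i))

def FTheta.F {I J : Type} (θ : Equiv.Perm (I × J)) (j : J) : FTheta θ :=
  (conGen (twoGraphRel θ)).mk' (FreeMonoid.of (TwoGraphGen.f j))

def FTheta.eWord {I J : Type} (θ : Equiv.Perm (I × J)) (u : List I) : FTheta θ :=
  (u.map (FTheta.E θ)).prod

def FTheta.fWord {I J : Type} (θ : Equiv.Perm (I × J)) (v : List J) : FTheta θ :=
  (v.map (FTheta.F θ)).prod

namespace UF

variable {I J : Type} (θ : Equiv.Perm (I × J))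

/-- Push a single `f_j` from the left through an e-word `u`, using θ⁻¹ repeatedly. -/
def pushF : J → List I → List I × J
  | j, [] => ([], j)
  | j, i :: u =>
    let p := θ.symm (i, j)
    let q := pushF p.2 u
    (p.1 :: q.1, q.2)

/-- Push an f-word `v` from the left through an e-word `u`. -/
def pushV : List J → List I → List I × List J
  | [], u => (u, [])
  | j :: v, u =>
    let q := pushV v u
    let r := pushF θ j q.1
    (r.1, r.2 :: q.2)

/-- The e-first normal form of a word in the generators. -/
def NF : List (TwoGraphGen I J) → List I × List J
  | [] => ([], [])
  | .e i :: w => let q := NF w; (i :: q.1, q.2)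
  | .f j :: w => let q := NF w; let r := pushF θ j q.1; (r.1, r.2 :: q.2)

theorem pushF_append (j : J) (u₁ u₂ : List I) :
    pushF θ j (u₁ ++ u₂) =
      ((pushF θ j u₁).1 ++ (pushF θ (pushF θ j u₁).2 u₂).1,
        (pushF θ (pushF θ j u₁).2 u₂).2) := by
  induction u₁ generalizing j with
  | nil => simp [pushF]
  | cons i u ih => simp [pushF, ih]

theorem NF_append (w x : List (TwoGraphGen I J)) :
    NF θ (w ++ x) =
      ((NF θ w).1 ++ (pushV θ (NF θ w).2 (NF θ x).1).1,
        (pushV θ (NF θ w).2 (NF θ x).1).2 ++ (NF θ x).2) := by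
  induction w with
  | nil => simp [NF, pushV]
  | cons g w ih =>
    cases g with
    | e i => simp [NF, ih]
    | f j =>
      simp only [List.cons_append, NF]
      rw [ih, pushF_append]
      simp [pushV]

theorem NF_fWord (v : List J) : NF θ (v.map .f) = ([], v) := by
  induction v with
  | nil => rfl
  | cons j v ih => simp [NF, ih, pushF]

theorem NF_eFirst (u : List I) (v : List J) :
    NF θ (u.map .e ++ v.map .f) = (u, v) := by
  induction u with
  | nil => simp [NF_fWord]
  | cons i u ih => simp [NF, ih]

/-- The congruence of having equal normal forms. -/
def nfCon : Con (FreeMonoid (TwoGraphGen I J)) where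
  r a b := NF θ (FreeMonoid.toList a) = NF θ (FreeMonoid.toList b)
  iseqv := ⟨fun _ => rfl, Eq.symm, Eq.trans⟩
  mul' {w x y z} h1 h2 := by
    show NF θ (FreeMonoid.toList (w * y)) = NF θ (FreeMonoid.toList (x * z))
    have h1' : NF θ (FreeMonoid.toList w) = NF θ (FreeMonoid.toList x) := h1
    have h2' : NF θ (FreeMonoid.toList y) = NF θ (FreeMonoid.toList z) := h2
    simp only [FreeMonoid.toList_mul, NF_append, h1', h2']

theorem conGen_le_nfCon : conGen (twoGraphRel θ) ≤ nfCon θ := by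
  apply Con.conGen_le.mpr
  rintro a b ⟨i, j, ha, hb⟩
  subst ha hb
  show NF θ _ = NF θ _
  simp [NF, pushF]

end UF

/-- Unique factorization in F_θ⁺ with all e's first: if
e_u f_v = e_{u'} f_{v'} with |u| = |u'| and |v| = |v'|, then u = u' and v = v'. -/
theorem unique_factorization_e_first {m n : ℕ} (θ : Equiv.Perm (Fin m × Fin n))
    (u u' : List (Fin m)) (v v' : List (Fin n))
    (hu : u.length = u'.length) (hv : v.length = v'.length)
    (h : FTheta.eWord θ u * FTheta.fWord θ v = FTheta.eWord θ u' * FTheta.fWord θ v') :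
    u = u' ∧ v = v' := by
  have key : ∀ (a : List (Fin m)) (b : List (Fin n)),
      FTheta.eWord θ a * FTheta.fWord θ b =
        (conGen (twoGraphRel θ)).mk' (FreeMonoid.ofList (a.map .e ++ b.map .f)) := by
    intro a b
    have e1 : ∀ a : List (Fin m), FTheta.eWord θ a =
        (conGen (twoGraphRel θ)).mk' (FreeMonoid.ofList (a.map .e)) := by
      intro a
      induction a with
      | nil => simp [FTheta.eWord]; rfl
      | cons i a ih =>
        have h1 : FTheta.eWord θ (i :: a) = FTheta.E θ i * FTheta.eWord θ a := by
          simp [FTheta.eWord]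
        rw [h1, ih, FTheta.E]
        rfl
    have e2 : ∀ b : List (Fin n), FTheta.fWord θ b =
        (conGen (twoGraphRel θ)).mk' (FreeMonoid.ofList (b.map .f)) := by
      intro b
      induction b with
      | nil => simp [FTheta.fWord]; rfl
      | cons j b ih =>
        have h1 : FTheta.fWord θ (j :: b) = FTheta.F θ j * FTheta.fWord θ b := by
          simp [FTheta.fWord]
        rw [h1, ih, FTheta.F]
        rfl
    rw [e1, e2]
    rfl
  rw [key, key] at h
  have h2 := (UF.conGen_le_nfCon θ) ((Con.eq _).mp h)
  have h3 : UF.NF θ (u.map .e ++ v.map .f) = UF.NF θ (u'.map .e ++ v'.map .f) := h2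
  rw [UF.NF_eFirst, UF.NF_eFirst] at h3
  exact ⟨congrArg Prod.fst h3, congrArg Prod.snd h3⟩
end

section
/- Let ρ be an atomic partially isometric representation of F_θ⁺ on a Hilbert space with distinguished orthonormal basis. If ξ is a basis vector and u (a word in the e's) and v (a word in the f's) satisfy ρ(e_u)·ℂξ = ℂξ = ρ(f_v)·ℂξ, then e_u f_v = f_v e_u in F_θ⁺. -/
-- basic word lemmas
lemma eWord_nil {I J : Type} (θ : Equiv.Perm (I × J)) : FTheta.eWord θ ([] : List I) = 1 := rfl
lemma fWord_nil {I J : Type} (θ : Equiv.Perm (I × J)) : FTheta.fWord θ ([] : List J) = 1 := rfl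
lemma eWord_cons {I J : Type} (θ : Equiv.Perm (I × J)) (i : I) (x : List I) :
    FTheta.eWord θ (i :: x) = FTheta.E θ i * FTheta.eWord θ x := by
  simp [FTheta.eWord]
lemma fWord_cons {I J : Type} (θ : Equiv.Perm (I × J)) (j : J) (y : List J) :
    FTheta.fWord θ (j :: y) = FTheta.F θ j * FTheta.fWord θ y := by
  simp [FTheta.fWord]
lemma eWord_append {I J : Type} (θ : Equiv.Perm (I × J)) (x x' : List I) :
    FTheta.eWord θ (x ++ x') = FTheta.eWord θ x * FTheta.eWord θ x' := by
  simp [FTheta.eWord]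
lemma fWord_append {I J : Type} (θ : Equiv.Perm (I × J)) (y y' : List J) :
    FTheta.fWord θ (y ++ y') = FTheta.fWord θ y * FTheta.fWord θ y' := by
  simp [FTheta.fWord]

-- single-letter reverse commutation
lemma swap_letter {I J : Type} (θ : Equiv.Perm (I × J)) (j : J) (i : I) :
    ∃ (i' : I) (j' : J), FTheta.E θ i' * FTheta.F θ j' = FTheta.F θ j * FTheta.E θ i := by
  refine ⟨(θ.symm (i,j)).1, (θ.symm (i,j)).2, ?_⟩
  have h : twoGraphRel θ
      (FreeMonoid.of (TwoGraphGen.e (θ.symm (i,j)).1) * FreeMonoid.of (TwoGraphGen.f (θ.symm (i,j)).2))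
      (FreeMonoid.of (TwoGraphGen.f (θ ((θ.symm (i,j)).1, (θ.symm (i,j)).2)).2) *
       FreeMonoid.of (TwoGraphGen.e (θ ((θ.symm (i,j)).1, (θ.symm (i,j)).2)).1)) :=
    ⟨_, _, rfl, rfl⟩
  have hr : (conGen (twoGraphRel θ))
      (FreeMonoid.of (TwoGraphGen.e (θ.symm (i,j)).1) * FreeMonoid.of (TwoGraphGen.f (θ.symm (i,j)).2))
      (FreeMonoid.of (TwoGraphGen.f (θ ((θ.symm (i,j)).1, (θ.symm (i,j)).2)).2) *
       FreeMonoid.of (TwoGraphGen.e (θ ((θ.symm (i,j)).1, (θ.symm (i,j)).2)).1)) :=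
    ConGen.Rel.of _ _ h
  have h2 := (Con.eq _).mpr hr
  have h3 : ((θ.symm (i,j)).1, (θ.symm (i,j)).2) = θ.symm (i,j) := rfl
  rw [h3, Equiv.apply_symm_apply] at h2
  show (conGen (twoGraphRel θ)).mk' _ * (conGen (twoGraphRel θ)).mk' _ =
    (conGen (twoGraphRel θ)).mk' _ * (conGen (twoGraphRel θ)).mk' _
  rw [← MonoidHom.map_mul, ← MonoidHom.map_mul]
  exact h2

-- commute a single e-letter from the right of an f-word to the left
lemma swap_word_f {I J : Type} (θ : Equiv.Perm (I × J)) :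
    ∀ (y : List J) (i : I), ∃ (i' : I) (y' : List J), y'.length = y.length ∧
      FTheta.E θ i' * FTheta.fWord θ y' = FTheta.fWord θ y * FTheta.E θ i := by
  intro y
  induction y with
  | nil => exact fun i => ⟨i, [], rfl, by simp [fWord_nil]⟩
  | cons j t ih =>
    intro i
    obtain ⟨i₁, y₁, hlen₁, h₁⟩ := ih i
    obtain ⟨i₂, j₂, h₂⟩ := swap_letter θ j i₁
    refine ⟨i₂, j₂ :: y₁, by simp [hlen₁], ?_⟩
    rw [fWord_cons, fWord_cons, ← mul_assoc, h₂, mul_assoc, h₁, ← mul_assoc]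

-- full reverse commutation: fWord y * eWord x = eWord x' * fWord y'
lemma swap_words {I J : Type} (θ : Equiv.Perm (I × J)) :
    ∀ (x : List I) (y : List J), ∃ (x' : List I) (y' : List J),
      x'.length = x.length ∧ y'.length = y.length ∧
      FTheta.eWord θ x' * FTheta.fWord θ y' = FTheta.fWord θ y * FTheta.eWord θ x := by
  intro x
  induction x with
  | nil => exact fun y => ⟨[], y, rfl, rfl, by simp [eWord_nil]⟩
  | cons i t ih =>
    intro y
    obtain ⟨i₂, y₂, hlen₂, h₂⟩ := swap_word_f θ y i
    obtain ⟨x₁, y₁, hxl, hyl, h₁⟩ := ih y₂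
    refine ⟨i₂ :: x₁, y₁, by simp [hxl], by omega, ?_⟩
    rw [eWord_cons, eWord_cons, mul_assoc, h₁, ← mul_assoc, h₂, mul_assoc]

-- blocks lemma
lemma blocks_eq {X : Type} {p : ℕ} (hp : 0 < p) :
    ∀ (bs cs : List (List X)), (∀ b ∈ bs, b.length = p) → (∀ c ∈ cs, c.length = p) →
      bs.flatten = cs.flatten → bs = cs := by
  intro bs
  induction bs with
  | nil =>
    intro cs _ hcs h
    cases cs with
    | nil => rfl
    | cons c cs' =>
      exfalso
      simp only [List.flatten_nil, List.flatten_cons] at h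
      have hc := hcs c (by simp)
      have : c = [] := by
        rcases List.append_eq_nil_iff.mp h.symm with ⟨h1, _⟩
        exact h1
      simp [this] at hc; omega
  | cons b bs' ih =>
    intro cs hbs hcs h
    cases cs with
    | nil =>
      exfalso
      simp only [List.flatten_nil, List.flatten_cons] at h
      have hb := hbs b (by simp)
      rcases List.append_eq_nil_iff.mp h with ⟨h1, _⟩
      simp [h1] at hb; omega
    | cons c cs' =>
      simp only [List.flatten_cons] at h
      have hlen : b.length = c.length := by
        rw [hbs b (by simp), hcs c (by simp)]
      obtain ⟨hbc, hj⟩ := List.append_inj h hlen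
      rw [hbc, ih cs' (fun x hx => hbs x (by simp [hx])) (fun x hx => hcs x (by simp [hx])) hj]

/-- In an atomic partially isometric representation ρ of F_θ⁺, if a basis
ray ℂξ satisfies ρ(e_u)·ℂξ = ℂξ = ρ(f_v)·ℂξ, then e_u f_v = f_v e_u in F_θ⁺.
The hypotheses `hEuniq`, `hFuniq` encode the fact (valid in atomic representations)
that words of a fixed length in one colour have pairwise orthogonal ranges, so that
only one word of a given length can carry one basis ray onto another. -/
theorem commute_of_common_fixed_ray {m n : ℕ} (θ : Equiv.Perm (Fin m × Fin n))
    {H : Type*} [NormedAddCommGroup H] [InnerProductSpace ℂ H] [CompleteSpace H]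
    {S : Type*} (ξ : S → H) (hon : Orthonormal ℂ ξ)
    (ρ : FTheta θ →* (H →L[ℂ] H))
    (hatomic : ∀ (w : FTheta θ) (s : S),
      (∃ (t : S) (α : ℂ), ‖α‖ = 1 ∧ ρ w (ξ s) = α • ξ t) ∨ ρ w (ξ s) = 0)
    (hEuniq : ∀ (u u' : List (Fin m)) (s t : S), u.length = u'.length →
      (∃ α : ℂ, α ≠ 0 ∧ ρ (FTheta.eWord θ u) (ξ s) = α • ξ t) →
      (∃ α : ℂ, α ≠ 0 ∧ ρ (FTheta.eWord θ u') (ξ s) = α • ξ t) → u = u')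
    (hFuniq : ∀ (v v' : List (Fin n)) (s t : S), v.length = v'.length →
      (∃ α : ℂ, α ≠ 0 ∧ ρ (FTheta.fWord θ v) (ξ s) = α • ξ t) →
      (∃ α : ℂ, α ≠ 0 ∧ ρ (FTheta.fWord θ v') (ξ s) = α • ξ t) → v = v')
    (u : List (Fin m)) (v : List (Fin n)) (s : S)
    (hu : ∃ α : ℂ, α ≠ 0 ∧ ρ (FTheta.eWord θ u) (ξ s) = α • ξ s)
    (hv : ∃ α : ℂ, α ≠ 0 ∧ ρ (FTheta.fWord θ v) (ξ s) = α • ξ s) :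
    FTheta.eWord θ u * FTheta.fWord θ v = FTheta.fWord θ v * FTheta.eWord θ u := by
  obtain ⟨α, hα, hus⟩ := hu
  obtain ⟨β, hβ, hvs⟩ := hv
  -- trivial case u = []
  by_cases hu0 : u = []
  · subst hu0; rw [eWord_nil, one_mul, mul_one]
  have hp : 0 < u.length := List.length_pos_iff.mpr hu0
  -- the commuting data: for each f-word y (of length |v|) produce Xi y, Bf y
  have hstep : ∀ y : List (Fin n), ∃ (x' : List (Fin m)) (y' : List (Fin n)),
      x'.length = u.length ∧ y'.length = y.length ∧
      FTheta.eWord θ x' * FTheta.fWord θ y' = FTheta.fWord θ y * FTheta.eWord θ u :=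
    fun y => swap_words θ u y
  choose Xi Bf hXlen hBlen hrel0 using hstep
  -- the chain of f-words
  obtain ⟨b', hb0, hbsucc⟩ : ∃ b' : ℕ → List (Fin n), b' 0 = v ∧ ∀ k, b' (k+1) = Bf (b' k) :=
    ⟨fun k => Nat.rec v (fun _ p => Bf p) k, rfl, fun _ => rfl⟩
  obtain ⟨Ξ, hΞdef⟩ : ∃ Ξ : ℕ → List (Fin m), ∀ k, Ξ k = Xi (b' k) := ⟨_, fun _ => rfl⟩
  have hblen : ∀ k, (b' k).length = v.length := by
    intro k; induction k with
    | zero => rw [hb0]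
    | succ k ih => rw [hbsucc, hBlen, ih]
  have hΞlen : ∀ k, (Ξ k).length = u.length := fun k => by rw [hΞdef]; exact hXlen _
  have hrel : ∀ k, FTheta.eWord θ (Ξ k) * FTheta.fWord θ (b' (k+1)) =
      FTheta.fWord θ (b' k) * FTheta.eWord θ u := by
    intro k; rw [hΞdef, hbsucc]; exact hrel0 (b' k)
  -- the vectors w k
  obtain ⟨w, hwdef⟩ : ∃ w : ℕ → H, ∀ k, w k = ρ (FTheta.fWord θ (b' k)) (ξ s) :=
    ⟨_, fun _ => rfl⟩
  have hw0 : w 0 = β • ξ s := by rw [hwdef, hb0]; exact hvs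
  have hkey : ∀ k, ρ (FTheta.eWord θ (Ξ k)) (w (k+1)) = α • w k := by
    intro k
    have h := congrArg (fun g => ρ g (ξ s)) (hrel k)
    simp only [map_mul, ContinuousLinearMap.mul_apply] at h
    rw [hwdef, hwdef, h, hus, map_smul]
  have hwne : ∀ k, w k ≠ 0 := by
    intro k; induction k with
    | zero => rw [hw0]; exact smul_ne_zero hβ (hon.ne_zero s)
    | succ k ih =>
      intro h0
      have h := hkey k
      rw [h0, map_zero] at h
      exact ih ((smul_eq_zero.mp h.symm).resolve_left hα)
  -- the accumulated chain e-words
  obtain ⟨C, hC0, hCs⟩ : ∃ C : ℕ → List (Fin m), C 0 = [] ∧ ∀ k, C (k+1) = C k ++ Ξ k :=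
    ⟨fun k => Nat.rec [] (fun k' p => p ++ Ξ k') k, rfl, fun _ => rfl⟩
  have hClen : ∀ k, (C k).length = k * u.length := by
    intro k; induction k with
    | zero => rw [hC0]; simp
    | succ k ih => rw [hCs, List.length_append, ih, hΞlen]; ring
  have hCact : ∀ k, ρ (FTheta.eWord θ (C k)) (w k) = (α ^ k * β) • ξ s := by
    intro k; induction k with
    | zero => rw [hC0, eWord_nil, map_one, ContinuousLinearMap.one_apply, hw0, pow_zero, one_mul]
    | succ k ih =>
      rw [hCs, eWord_append, map_mul, ContinuousLinearMap.mul_apply, hkey, map_smul, ih,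
        smul_smul]
      ring_nf
  -- powers of u
  obtain ⟨P, hP0, hPs⟩ : ∃ P : ℕ → List (Fin m), P 0 = [] ∧ ∀ k, P (k+1) = u ++ P k :=
    ⟨fun k => Nat.rec [] (fun _ p => u ++ p) k, rfl, fun _ => rfl⟩
  have hPlen : ∀ k, (P k).length = k * u.length := by
    intro k; induction k with
    | zero => rw [hP0]; simp
    | succ k ih => rw [hPs, List.length_append, ih]; ring
  have hPact : ∀ k, ρ (FTheta.eWord θ (P k)) (ξ s) = (α ^ k) • ξ s := by
    intro k; induction k with
    | zero => rw [hP0, eWord_nil, map_one, ContinuousLinearMap.one_apply, pow_zero, one_smul]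
    | succ k ih =>
      rw [hPs, eWord_append, map_mul, ContinuousLinearMap.mul_apply, ih, map_smul, hus,
        smul_smul]
      ring_nf
  -- flatten representations
  have hCflat : ∀ k, C k = ((List.range k).map Ξ).flatten := by
    intro k; induction k with
    | zero => rw [hC0]; simp
    | succ k ih =>
      rw [hCs, ih, List.range_succ, List.map_append, List.flatten_append]
      simp
  have hPflat : ∀ k, P k = (List.replicate k u).flatten := by
    intro k; induction k with
    | zero => rw [hP0]; simp
    | succ k ih => rw [hPs, ih, List.replicate_succ, List.flatten_cons]
  -- pigeonhole
  have hfin : Finite {l : List (Fin n) // l.length = v.length} := by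
    refine Finite.of_injective
      (fun l => (fun i : Fin v.length => l.1.get (Fin.cast l.2.symm i))) ?_
    intro l1 l2 h
    apply Subtype.ext
    apply List.ext_get (by rw [l1.2, l2.2])
    intro i h1 h2
    have := congrFun h ⟨i, by rw [← l1.2]; exact h1⟩
    simpa using this
  obtain ⟨k1, k2, hk12, hbk12⟩ := Finite.exists_ne_map_eq_of_infinite
    (fun k : ℕ => (⟨b' k, hblen k⟩ : {l : List (Fin n) // l.length = v.length}))
  have hbk12' : b' k1 = b' k2 := congrArg Subtype.val hbk12
  obtain ⟨L, L', hLL', hbeq⟩ : ∃ L L', L < L' ∧ b' L = b' L' := by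
    rcases lt_or_gt_of_ne hk12 with h | h
    · exact ⟨k1, k2, h, hbk12'⟩
    · exact ⟨k2, k1, h, hbk12'.symm⟩
  set M := L' - L with hMdef
  have hMpos : 0 < M := by omega
  have hMLe : M + L = L' := by omega
  have hweq : w L = w L' := by rw [hwdef, hwdef, hbeq]
  -- target of w L'
  obtain ⟨z, μ, hμ1, hμ⟩ := (hatomic (FTheta.fWord θ (b' L')) s).resolve_right
    (by rw [← hwdef]; exact hwne L')
  have hμ0 : μ ≠ 0 := by intro h; rw [h] at hμ1; simp at hμ1
  have hξz : ξ z = μ⁻¹ • w L' := by rw [hwdef, hμ, inv_smul_smul₀ hμ0]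
  -- the two e-words from z to s
  have h1 : ρ (FTheta.eWord θ (C L')) (ξ z) = (μ⁻¹ * (α ^ L' * β)) • ξ s := by
    rw [hξz, map_smul, hCact, smul_smul]
  have h2 : ρ (FTheta.eWord θ (P M ++ C L)) (ξ z) =
      (μ⁻¹ * (α ^ L * β) * α ^ M) • ξ s := by
    rw [eWord_append, map_mul, ContinuousLinearMap.mul_apply, hξz, map_smul, ← hweq, hCact,
      map_smul, map_smul, hPact, smul_smul, smul_smul]
  have hlen12 : (C L').length = (P M ++ C L).length := by
    rw [List.length_append, hPlen, hClen, hClen, ← add_mul, hMLe]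
  have hCC : C L' = P M ++ C L := by
    refine hEuniq (C L') (P M ++ C L) z s hlen12 ⟨_, ?_, h1⟩ ⟨_, ?_, h2⟩
    · exact mul_ne_zero (inv_ne_zero hμ0) (mul_ne_zero (pow_ne_zero _ hα) hβ)
    · exact mul_ne_zero (mul_ne_zero (inv_ne_zero hμ0)
        (mul_ne_zero (pow_ne_zero _ hα) hβ)) (pow_ne_zero _ hα)
  -- block decomposition
  have hlist : (List.range L').map Ξ = List.replicate M u ++ (List.range L).map Ξ := by
    refine blocks_eq hp _ _ ?_ ?_ ?_
    · intro b hb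
      obtain ⟨k, _, rfl⟩ := List.mem_map.mp hb
      exact hΞlen k
    · intro c hc
      rcases List.mem_append.mp hc with h | h
      · rw [List.eq_of_mem_replicate h]
      · obtain ⟨k, _, rfl⟩ := List.mem_map.mp h
        exact hΞlen k
    · rw [← hCflat, List.flatten_append, ← hPflat, ← hCflat]
      exact hCC
  have hΞu : ∀ k, k < L' → Ξ k = u := by
    intro k
    induction k using Nat.strong_induction_on with
    | _ k ih =>
      intro hk
      have hklen : k < ((List.range L').map Ξ).length := by
        rw [List.length_map, List.length_range]; exact hk
      have hk2 := List.getElem_of_eq hlist hklen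
      rw [List.getElem_map, List.getElem_range] at hk2
      rw [List.getElem_append] at hk2
      by_cases hkM : k < (List.replicate M u).length
      · rw [dif_pos hkM, List.getElem_replicate] at hk2
        exact hk2
      · rw [dif_neg hkM] at hk2
        rw [List.getElem_map, List.getElem_range] at hk2
        rw [List.length_replicate] at hkM
        have hkM' : ¬ k < M := hkM
        refine hk2.trans (ih (k - (List.replicate M u).length) ?_ ?_)
        · rw [List.length_replicate]; omega
        · rw [List.length_replicate]; omega
  -- downward injectivity
  have hinj : ∀ k j, k < L' → j < L' → b' (k+1) = b' (j+1) → b' k = b' j := by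
    intro k j hk hj he
    have e1 := hrel k
    have e2 := hrel j
    rw [hΞu k hk] at e1
    rw [hΞu j hj] at e2
    have hfe : FTheta.fWord θ (b' k) * FTheta.eWord θ u =
        FTheta.fWord θ (b' j) * FTheta.eWord θ u := by
      rw [← e1, ← e2, he]
    have hwkj : w k = w j := by
      have h := congrArg (fun g => ρ g (ξ s)) hfe
      simp only [map_mul, ContinuousLinearMap.mul_apply] at h
      rw [hus, map_smul, map_smul] at h
      rw [hwdef, hwdef]
      exact smul_right_injective H hα h
    obtain ⟨t, ν, hν1, hν⟩ := (hatomic (FTheta.fWord θ (b' k)) s).resolve_right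
      (by rw [← hwdef]; exact hwne k)
    have hν0 : ν ≠ 0 := by intro h; rw [h] at hν1; simp at hν1
    refine hFuniq (b' k) (b' j) s t (by rw [hblen, hblen]) ⟨ν, hν0, hν⟩ ⟨ν, hν0, ?_⟩
    rw [← hwdef, ← hwkj, hwdef]
    exact hν
  -- descend from b' L = b' L' to b' 0 = b' M
  have hdesc : ∀ d, d ≤ L → b' (L - d) = b' (L' - d) := by
    intro d
    induction d with
    | zero => intro _; simpa using hbeq
    | succ d ih =>
      intro hd
      have h1 := ih (by omega)
      have hk : L - (d+1) + 1 = L - d := by omega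
      have hj : L' - (d+1) + 1 = L' - d := by omega
      refine hinj (L - (d+1)) (L' - (d+1)) (by omega) (by omega) ?_
      rw [hk, hj]; exact h1
  have hb0M : b' M = v := by
    have h := hdesc L le_rfl
    simp only [Nat.sub_self] at h
    rw [← h, hb0]
  -- conclude
  have hfin' := hrel (M - 1)
  rw [hΞu (M-1) (by omega)] at hfin'
  have hM1 : M - 1 + 1 = M := by omega
  rw [hM1, hb0M] at hfin'
  -- hfin' : eWord u * fWord v = fWord (b' (M-1)) * eWord u
  have hlast : ρ (FTheta.fWord θ (b' (M-1))) (ξ s) = β • ξ s := by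
    have h := congrArg (fun g => ρ g (ξ s)) hfin'
    simp only [map_mul, ContinuousLinearMap.mul_apply] at h
    rw [hvs, map_smul, hus, map_smul] at h
    rw [smul_comm] at h
    exact (smul_right_injective H hα h).symm
  have hbv : b' (M-1) = v := hFuniq (b' (M-1)) v s s (by rw [hblen]) ⟨β, hβ, hlast⟩ ⟨β, hβ, hvs⟩
  rw [hfin', hbv]
end

section
/- Suppose e_{u₀} f_{v₀} = f_{v₀} e_{u₀} in F_θ⁺ with |u₀| = k and |v₀| = l. Writing u₀ = i_{k-1,0}⋯i_{0,0} and v₀ = j_{0,l-1}⋯j_{0,0}, the commutation relations determine unique letters i_{s,t} ∈ {1,…,m} and j_{s,t} ∈ {1,…,n} indexed by (s,t) ∈ C_k × C_l (cyclic groups) satisfying f_{j_{s+1,t}} e_{i_{s,t}} = e_{i_{s,t+1}} f_{j_{s,t}} for all s ∈ C_k, t ∈ C_l. -/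
namespace RBRAux

open TwoGraphGen

theorem getElem_congr {α : Type _} {L L' : List α} {i i' : ℕ} (hL : L = L') (hi : i = i')
    (h : i < L.length) : L[i]'h = L'[i']'(hi ▸ hL ▸ h) := by
  subst hL; subst hi; rfl

variable {I J : Type} (θ : Equiv.Perm (I × J))

/-- Pull the letter `f j` from the left of `eWord u` to the right. -/
def pull : J → List I → List I × J
  | j, [] => ([], j)
  | j, i :: u => ((θ.symm (i, j)).1 :: (pull (θ.symm (i, j)).2 u).1,
      (pull (θ.symm (i, j)).2 u).2)

/-- The intermediate `f`-letters while pulling `f j` through `eWord u`. -/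
def trace : J → List I → List J
  | j, [] => [j]
  | j, i :: u => j :: trace (θ.symm (i, j)).2 u

theorem pull_fst_length (j : J) (u : List I) : (pull θ j u).1.length = u.length := by
  induction u generalizing j with
  | nil => rfl
  | cons i u ih => simp [pull, ih]

theorem trace_length (j : J) (u : List I) : (trace θ j u).length = u.length + 1 := by
  induction u generalizing j with
  | nil => rfl
  | cons i u ih => simp [trace, ih]

theorem trace_zero (j : J) (u : List I) (h : 0 < (trace θ j u).length) :
    (trace θ j u)[0]'h = j := by
  cases u <;> rfl

theorem trace_last (j : J) (u : List I) {r : ℕ} (hr : r = u.length)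
    (h : r < (trace θ j u).length) : (trace θ j u)[r]'h = (pull θ j u).2 := by
  subst hr
  induction u generalizing j with
  | nil => rfl
  | cons i u ih =>
    simpa [trace, pull] using ih (θ.symm (i, j)).2 (by simp [trace_length])

theorem step (j : J) (u : List I) (r : ℕ) (hr : r < u.length)
    (h1 : r < (trace θ j u).length) (h2 : r < (pull θ j u).1.length)
    (h3 : r + 1 < (trace θ j u).length) :
    θ.symm (u[r]'hr, (trace θ j u)[r]'h1) =
      ((pull θ j u).1[r]'h2, (trace θ j u)[r + 1]'h3) := by
  induction u generalizing j r with
  | nil => exact absurd hr (by simp)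
  | cons i u ih =>
    cases r with
    | zero =>
      simp only [trace, pull, List.getElem_cons_zero, List.getElem_cons_succ]
      rw [trace_zero]
    | succ r =>
      simp only [trace, pull, List.getElem_cons_succ]
      apply ih

/-- Pull the whole block `eWord u` from the right of `fWord v` to the left. -/
def pullAll : List J → List I → List I × List J
  | [], u => (u, [])
  | j :: v, u => ((pull θ j (pullAll v u).1).1,
      (pull θ j (pullAll v u).1).2 :: (pullAll v u).2)

theorem pullAll_fst_length (v : List J) (u : List I) :
    (pullAll θ v u).1.length = u.length := by
  induction v with
  | nil => rfl
  | cons j v ih => simp [pullAll, pull_fst_length, ih]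

theorem pullAll_nil_right (v : List J) : pullAll θ v ([] : List I) = ([], v) := by
  induction v with
  | nil => rfl
  | cons j v ih => simp [pullAll, ih, pull]

/-- The normal-form action of a generator. -/
def act : TwoGraphGen I J → Function.End (List I × List J)
  | .e i => fun x => (i :: x.1, x.2)
  | .f j => fun x => ((pull θ j x.1).1, (pull θ j x.1).2 :: x.2)

theorem end_mul_apply {X : Type} (a b : Function.End X) (x : X) : (a * b) x = a (b x) := rfl

theorem act_rel (i : I) (j : J) :
    act θ (e i) * act θ (f j) = act θ (f (θ (i, j)).2) * act θ (e (θ (i, j)).1) := by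
  funext x
  rw [end_mul_apply, end_mul_apply]
  simp only [act, pull, Prod.mk.eta, Equiv.symm_apply_apply]

/-- The normal-form homomorphism on `F_θ⁺`. -/
def nfHom : FTheta θ →* Function.End (List I × List J) :=
  (conGen (twoGraphRel θ)).lift (FreeMonoid.lift (act θ)) (by
    apply Con.conGen_le.mpr
    rintro a b ⟨i, j, rfl, rfl⟩
    rw [Con.ker_rel, map_mul, map_mul, FreeMonoid.lift_eval_of, FreeMonoid.lift_eval_of,
      FreeMonoid.lift_eval_of, FreeMonoid.lift_eval_of, act_rel])

theorem nfHom_E (i : I) : nfHom θ (FTheta.E θ i) = act θ (e i) :=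
  Con.lift_mk' _ _

theorem nfHom_F (j : J) : nfHom θ (FTheta.F θ j) = act θ (f j) :=
  Con.lift_mk' _ _

theorem nfHom_eWord (u : List I) (x : List I × List J) :
    nfHom θ (FTheta.eWord θ u) x = (u ++ x.1, x.2) := by
  induction u with
  | nil =>
    show nfHom θ (FTheta.eWord θ []) x = _
    rw [show FTheta.eWord θ [] = 1 from rfl, map_one]
    rfl
  | cons i u ih =>
    have h : FTheta.eWord θ (i :: u) = FTheta.E θ i * FTheta.eWord θ u := by
      simp [FTheta.eWord]
    rw [h, map_mul, end_mul_apply, ih, nfHom_E]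
    rfl

theorem nfHom_fWord (v : List J) (x : List I × List J) :
    nfHom θ (FTheta.fWord θ v) x = ((pullAll θ v x.1).1, (pullAll θ v x.1).2 ++ x.2) := by
  induction v with
  | nil =>
    show nfHom θ (FTheta.fWord θ []) x = _
    rw [show FTheta.fWord θ [] = 1 from rfl, map_one]
    rfl
  | cons j v ih =>
    have h : FTheta.fWord θ (j :: v) = FTheta.F θ j * FTheta.fWord θ v := by
      simp [FTheta.fWord]
    rw [h, map_mul, end_mul_apply, ih, nfHom_F]
    simp [act, pullAll]

theorem comm_pullAll {u : List I} {v : List J}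
    (h : FTheta.eWord θ u * FTheta.fWord θ v = FTheta.fWord θ v * FTheta.eWord θ u) :
    pullAll θ v u = (u, v) := by
  have h2 := congrArg (fun z => nfHom θ z (([] : List I), ([] : List J))) h
  simp only [map_mul, end_mul_apply, nfHom_eWord, nfHom_fWord, pullAll_nil_right,
    List.append_nil] at h2
  exact Prod.ext_iff.mpr ⟨(congrArg Prod.fst h2).symm, (congrArg Prod.snd h2).symm⟩

/-- The key single-letter characterization: a one-letter commutation relation holds in
`F_θ⁺` iff it is dictated by `θ`. -/
theorem rel_iff (i i' : I) (j j' : J) :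
    FTheta.F θ j' * FTheta.E θ i = FTheta.E θ i' * FTheta.F θ j ↔
      θ.symm (i, j') = (i', j) := by
  constructor
  · intro h
    have h2 := congrArg (fun z => nfHom θ z (([] : List I), ([] : List J))) h
    simp only [map_mul, nfHom_E, nfHom_F] at h2
    rw [end_mul_apply, end_mul_apply] at h2
    simp only [act, pull] at h2
    have e1 : (θ.symm (i, j')).1 = i' := by
      simpa using congrArg (fun z => z.1) h2
    have e2 : (θ.symm (i, j')).2 = j := by
      simpa using congrArg (fun z => z.2) h2
    rw [← e1, ← e2]
  · intro h
    have hθ : θ (i', j) = (i, j') := by rw [← h, Equiv.apply_symm_apply]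
    symm
    exact (Con.eq _).mpr (ConGen.Rel.of _ _ ⟨i', j, rfl, by rw [hθ]⟩)

/-- Uniqueness of the torus of letters satisfying the grid equations. -/
theorem grid_unique {k l : ℕ} [NeZero k] [NeZero l]
    (p q : (ZMod k → ZMod l → I) × (ZMod k → ZMod l → J))
    (h1 : ∀ s : ZMod k, q.1 s 0 = p.1 s 0)
    (h2 : ∀ t : ZMod l, q.2 0 t = p.2 0 t)
    (hp : ∀ s t, θ.symm (p.1 s t, p.2 (s + 1) t) = (p.1 s (t + 1), p.2 s t))
    (hq : ∀ s t, θ.symm (q.1 s t, q.2 (s + 1) t) = (q.1 s (t + 1), q.2 s t)) :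
    q = p := by
  have hk : 0 < k := Nat.pos_of_ne_zero (NeZero.ne k)
  have inner : ∀ t : ZMod l, (∀ s, q.1 s t = p.1 s t) →
      (∀ s, q.2 s t = p.2 s t) ∧ (∀ s, q.1 s (t + 1) = p.1 s (t + 1)) := by
    intro t hcol
    have key : ∀ a : ℕ, a < k →
        q.2 ((k - 1 - a : ℕ) : ZMod k) t = p.2 ((k - 1 - a : ℕ) : ZMod k) t ∧
        q.1 ((k - 1 - a : ℕ) : ZMod k) (t + 1) = p.1 ((k - 1 - a : ℕ) : ZMod k) (t + 1) := by
      intro a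
      induction a with
      | zero =>
        intro _
        have hs0 : ((k - 1 - 0 : ℕ) : ZMod k) + 1 = 0 := by
          rw [show ((k - 1 - 0 : ℕ) : ZMod k) + 1 = ((k - 1 - 0 + 1 : ℕ) : ZMod k) by
            push_cast; ring, show k - 1 - 0 + 1 = k by omega, ZMod.natCast_self]
        have e1 := hq ((k - 1 - 0 : ℕ) : ZMod k) t
        have e2 := hp ((k - 1 - 0 : ℕ) : ZMod k) t
        rw [hs0] at e1 e2
        rw [h2 t, hcol] at e1
        rw [e2, Prod.mk.injEq] at e1
        exact ⟨e1.2.symm, e1.1.symm⟩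
      | succ a ih =>
        intro ha
        have ih' := ih (by omega)
        have hs1 : ((k - 1 - (a + 1) : ℕ) : ZMod k) + 1 = ((k - 1 - a : ℕ) : ZMod k) := by
          rw [show k - 1 - a = k - 1 - (a + 1) + 1 by omega]
          push_cast; ring
        have e1 := hq ((k - 1 - (a + 1) : ℕ) : ZMod k) t
        have e2 := hp ((k - 1 - (a + 1) : ℕ) : ZMod k) t
        rw [hs1] at e1 e2
        rw [ih'.1, hcol] at e1
        rw [e2, Prod.mk.injEq] at e1
        exact ⟨e1.2.symm, e1.1.symm⟩
    have all : ∀ s : ZMod k, q.2 s t = p.2 s t ∧ q.1 s (t + 1) = p.1 s (t + 1) := by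
      intro s
      have hval := ZMod.val_lt s
      have h := key (k - 1 - s.val) (by omega)
      have hs : ((k - 1 - (k - 1 - s.val) : ℕ) : ZMod k) = s := by
        rw [show k - 1 - (k - 1 - s.val) = s.val by omega, ZMod.natCast_zmod_val]
      rwa [hs] at h
    exact ⟨fun s => (all s).1, fun s => (all s).2⟩
  have outer : ∀ T : ℕ, ∀ s, q.1 s ((T : ZMod l)) = p.1 s ((T : ZMod l)) := by
    intro T
    induction T with
    | zero => intro s; simpa using h1 s
    | succ T ih =>
      intro s
      have hc : ((T + 1 : ℕ) : ZMod l) = (T : ZMod l) + 1 := by push_cast; ring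
      rw [hc]
      exact (inner _ ih).2 s
  have colall : ∀ t : ZMod l, ∀ s, q.1 s t = p.1 s t := by
    intro t s
    have := outer t.val s
    rwa [ZMod.natCast_zmod_val] at this
  refine Prod.ext_iff.mpr ⟨?_, ?_⟩
  · funext s t; exact colall t s
  · funext s t; exact (inner t (colall t)).1 s

end RBRAux

/-- If e_{u₀} f_{v₀} = f_{v₀} e_{u₀} with |u₀| = k, |v₀| = l
(u₀ = i_{k-1,0}⋯i_{0,0}, v₀ = j_{0,l-1}⋯j_{0,0}), then the commutation relations
determine unique letters i_{s,t}, j_{s,t} indexed by C_k × C_l with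
f_{j_{s+1,t}} e_{i_{s,t}} = e_{i_{s,t+1}} f_{j_{s,t}} for all s ∈ C_k, t ∈ C_l. -/
theorem ring_by_ring_letters {m n : ℕ} (θ : Equiv.Perm (Fin m × Fin n)) (k l : ℕ)
    (hk : 0 < k) (hl : 0 < l)
    (u₀ : List (Fin m)) (v₀ : List (Fin n)) (hu : u₀.length = k) (hv : v₀.length = l)
    (hcomm : FTheta.eWord θ u₀ * FTheta.fWord θ v₀ =
      FTheta.fWord θ v₀ * FTheta.eWord θ u₀) :
    ∃! p : (ZMod k → ZMod l → Fin m) × (ZMod k → ZMod l → Fin n),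
      (∀ (s : ℕ) (hs : s < k), p.1 (s : ZMod k) 0 = u₀.get ⟨k - 1 - s, by omega⟩) ∧
      (∀ (t : ℕ) (ht : t < l), p.2 0 (t : ZMod l) = v₀.get ⟨l - 1 - t, by omega⟩) ∧
      (∀ (s : ZMod k) (t : ZMod l),
        FTheta.F θ (p.2 (s + 1) t) * FTheta.E θ (p.1 s t) =
        FTheta.E θ (p.1 s (t + 1)) * FTheta.F θ (p.2 s t)) := by
  haveI : NeZero k := ⟨hk.ne'⟩
  haveI : NeZero l := ⟨hl.ne'⟩
  have H := RBRAux.comm_pullAll θ hcomm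
  let letter : ℕ → Fin n := fun t => v₀.get ⟨l - 1 - t, by rw [hv]; omega⟩
  let c : ℕ → List (Fin m) := fun t => (RBRAux.pullAll θ (v₀.drop (l - t)) u₀).1
  have hclen : ∀ t, (c t).length = k := fun t =>
    (RBRAux.pullAll_fst_length θ _ u₀).trans hu
  have hc0 : c 0 = u₀ := by
    show (RBRAux.pullAll θ (v₀.drop (l - 0)) u₀).1 = u₀
    rw [Nat.sub_zero, ← hv, List.drop_length]
    rfl
  have hcl : c l = u₀ := by
    show (RBRAux.pullAll θ (v₀.drop (l - l)) u₀).1 = u₀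
    rw [Nat.sub_self, List.drop_zero]
    exact congrArg Prod.fst H
  have htail : ∀ d, d ≤ l → (RBRAux.pullAll θ (v₀.drop d) u₀).2 = v₀.drop d := by
    intro d
    induction d with
    | zero =>
      intro _
      rw [List.drop_zero]
      exact congrArg Prod.snd H
    | succ d ih =>
      intro hd
      have hd' : d < v₀.length := by rw [hv]; omega
      have h1 := ih (by omega)
      rw [List.drop_eq_getElem_cons hd'] at h1
      simp only [RBRAux.pullAll, List.cons.injEq] at h1
      exact h1.2
  have hout : ∀ d (hdl : d < l),
      (RBRAux.pull θ (v₀[d]'(by rw [hv]; omega))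
        (RBRAux.pullAll θ (v₀.drop (d + 1)) u₀).1).2 = v₀[d]'(by rw [hv]; omega) := by
    intro d hdl
    have h1 := htail d (by omega)
    rw [List.drop_eq_getElem_cons (by rw [hv]; omega)] at h1
    simp only [RBRAux.pullAll, List.cons.injEq] at h1
    exact h1.1
  have hstep : ∀ t, t < l → c (t + 1) = (RBRAux.pull θ (letter t) (c t)).1 ∧
      (RBRAux.pull θ (letter t) (c t)).2 = letter t := by
    intro t ht
    have hlt : l - 1 - t < v₀.length := by rw [hv]; omega
    have hdrop : v₀.drop (l - (t + 1)) = v₀[l - 1 - t]'hlt :: v₀.drop (l - t) := by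
      rw [show l - (t + 1) = l - 1 - t by omega, List.drop_eq_getElem_cons hlt,
        show l - 1 - t + 1 = l - t by omega]
    have hlettereq : letter t = v₀[l - 1 - t]'hlt := by
      show v₀.get ⟨l - 1 - t, _⟩ = _
      simp [List.get_eq_getElem]
    constructor
    · show (RBRAux.pullAll θ (v₀.drop (l - (t + 1))) u₀).1 = _
      rw [hdrop, hlettereq]
      rfl
    · rw [hlettereq]
      have h2 := hout (l - 1 - t) (by omega)
      rw [show l - 1 - t + 1 = l - t by omega] at h2
      exact h2
  let P1 : ZMod k → ZMod l → Fin m := fun s t =>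
    (c t.val)[k - 1 - s.val]'(by rw [hclen]; omega)
  let P2 : ZMod k → ZMod l → Fin n := fun s t =>
    (RBRAux.trace θ (letter t.val) (c t.val))[k - s.val]'(by
      rw [RBRAux.trace_length, hclen]; omega)
  have hB1 : ∀ (s : ℕ) (hs : s < k), P1 (s : ZMod k) 0 = u₀.get ⟨k - 1 - s, by omega⟩ := by
    intro s hs
    have h1 : ((s : ZMod k)).val = s := ZMod.val_natCast_of_lt hs
    have h2 : (0 : ZMod l).val = 0 := ZMod.val_zero
    have e1 : P1 (s : ZMod k) 0 = u₀[k - 1 - s]'(by rw [hu]; omega) :=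
      RBRAux.getElem_congr (by rw [h2]; exact hc0) (by rw [h1]) (by rw [hclen]; omega)
    rw [e1]
    simp [List.get_eq_getElem]
  have hB2 : ∀ (t : ℕ) (ht : t < l), P2 0 (t : ZMod l) = v₀.get ⟨l - 1 - t, by omega⟩ := by
    intro t ht
    have h1 : ((t : ZMod l)).val = t := ZMod.val_natCast_of_lt ht
    have h2 : (0 : ZMod k).val = 0 := ZMod.val_zero
    have e1 : P2 0 (t : ZMod l) = (RBRAux.trace θ (letter t) (c t))[k]'(by
        rw [RBRAux.trace_length, hclen]; omega) :=
      RBRAux.getElem_congr (by rw [h1]) (by rw [h2]; omega) (by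
        rw [RBRAux.trace_length, hclen]; omega)
    rw [e1, RBRAux.trace_last θ _ _ (hclen t).symm, (hstep t ht).2]
  have hp3' : ∀ (s : ZMod k) (t : ZMod l),
      θ.symm (P1 s t, P2 (s + 1) t) = (P1 s (t + 1), P2 s t) := by
    intro s t
    have hT : t.val < l := ZMod.val_lt t
    have hs : s.val < k := ZMod.val_lt s
    have hmain := RBRAux.step θ (letter t.val) (c t.val) (k - 1 - s.val)
      (by rw [hclen]; omega) (by rw [RBRAux.trace_length, hclen]; omega)
      (by rw [RBRAux.pull_fst_length, hclen]; omega)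
      (by rw [RBRAux.trace_length, hclen]; omega)
    have hcsucc : c ((t + 1).val) = (RBRAux.pull θ (letter t.val) (c t.val)).1 := by
      rcases Nat.lt_or_ge (t.val + 1) l with h | h
      · have hv1 : (t + 1 : ZMod l).val = t.val + 1 := by
          rw [show (t + 1 : ZMod l) = ((t.val + 1 : ℕ) : ZMod l) by
            push_cast [ZMod.natCast_zmod_val]; ring, ZMod.val_natCast_of_lt h]
        rw [hv1]
        exact (hstep t.val hT).1
      · have ht' : t.val = l - 1 := by omega
        have hv0 : (t + 1 : ZMod l).val = 0 := by
          rw [show (t + 1 : ZMod l) = ((t.val + 1 : ℕ) : ZMod l) by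
            push_cast [ZMod.natCast_zmod_val]; ring, ht',
            show l - 1 + 1 = l by omega, ZMod.natCast_self, ZMod.val_zero]
        rw [hv0, hc0, ← hcl, ht']
        have h3 := (hstep (l - 1) (by omega)).1
        rw [show l - 1 + 1 = l by omega] at h3
        exact h3
    have eB : P2 (s + 1) t = (RBRAux.trace θ (letter t.val) (c t.val))[k - 1 - s.val]'(by
        rw [RBRAux.trace_length, hclen]; omega) := by
      rcases Nat.lt_or_ge (s.val + 1) k with h | h
      · have hv1 : (s + 1 : ZMod k).val = s.val + 1 := by
          rw [show (s + 1 : ZMod k) = ((s.val + 1 : ℕ) : ZMod k) by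
            push_cast [ZMod.natCast_zmod_val]; ring, ZMod.val_natCast_of_lt h]
        exact RBRAux.getElem_congr rfl (by rw [hv1]; omega)
          (by rw [RBRAux.trace_length, hclen]; omega)
      · have hsv : s.val = k - 1 := by omega
        have hv0 : (s + 1 : ZMod k).val = 0 := by
          rw [show (s + 1 : ZMod k) = ((s.val + 1 : ℕ) : ZMod k) by
            push_cast [ZMod.natCast_zmod_val]; ring, hsv,
            show k - 1 + 1 = k by omega, ZMod.natCast_self, ZMod.val_zero]
        have e1 : P2 (s + 1) t = (RBRAux.trace θ (letter t.val) (c t.val))[k]'(by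
            rw [RBRAux.trace_length, hclen]; omega) :=
          RBRAux.getElem_congr rfl (by rw [hv0]; omega)
            (by rw [RBRAux.trace_length, hclen]; omega)
        rw [e1, RBRAux.trace_last θ _ _ (hclen t.val).symm, (hstep t.val hT).2]
        exact (RBRAux.trace_zero θ _ _ (by rw [RBRAux.trace_length]; omega)).symm.trans
          (RBRAux.getElem_congr rfl (show (0 : ℕ) = k - 1 - s.val by omega)
            (by rw [RBRAux.trace_length]; omega))
    have eC : P1 s (t + 1) = (RBRAux.pull θ (letter t.val) (c t.val)).1[k - 1 - s.val]'(by
        rw [RBRAux.pull_fst_length, hclen]; omega) :=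
      RBRAux.getElem_congr hcsucc rfl (by rw [hclen]; omega)
    have eD : P2 s t = (RBRAux.trace θ (letter t.val) (c t.val))[k - 1 - s.val + 1]'(by
        rw [RBRAux.trace_length, hclen]; omega) :=
      RBRAux.getElem_congr rfl (by omega) (by rw [RBRAux.trace_length, hclen]; omega)
    rw [eB, eC, eD]
    exact hmain
  have hB3 : ∀ (s : ZMod k) (t : ZMod l),
      FTheta.F θ (P2 (s + 1) t) * FTheta.E θ (P1 s t) =
      FTheta.E θ (P1 s (t + 1)) * FTheta.F θ (P2 s t) :=
    fun s t => (RBRAux.rel_iff θ _ _ _ _).mpr (hp3' s t)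
  refine ⟨⟨P1, P2⟩, ⟨hB1, hB2, hB3⟩, ?_⟩
  rintro ⟨Q1, Q2⟩ ⟨hq1, hq2, hq3⟩
  apply RBRAux.grid_unique θ ⟨P1, P2⟩ ⟨Q1, Q2⟩
  · intro s
    have hs := ZMod.val_lt s
    have e1 := hq1 s.val hs
    have e2 := hB1 s.val hs
    rw [ZMod.natCast_zmod_val] at e1 e2
    exact e1.trans e2.symm
  · intro t
    have ht := ZMod.val_lt t
    have e1 := hq2 t.val ht
    have e2 := hB2 t.val ht
    rw [ZMod.natCast_zmod_val] at e1 e2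
    exact e1.trans e2.symm
  · exact hp3'
  · exact fun s t => (RBRAux.rel_iff θ _ _ _ _).mp (hq3 s t)
end

section
/- Let θ be a permutation of {1,…,m}×{1,…,n} and let ((i₀,j₀),(i₁,j₁),…,(i_{k-1},j_{k-1})) be a cycle of θ. Set u₀ = i_{k-1}⋯i_1 i_0 and v₀ = j_0 j_1 ⋯ j_{k-1}. Then e_{u₀} f_{v₀} = f_{v₀} e_{u₀} in F_θ⁺. -/
lemma FTheta.basic_rel {I J : Type} (θ : Equiv.Perm (I × J)) (i : I) (j : J) :
    FTheta.E θ i * FTheta.F θ j = FTheta.F θ (θ (i, j)).2 * FTheta.E θ (θ (i, j)).1 := by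
  simp only [FTheta.E, FTheta.F, ← map_mul]
  exact (Con.eq _).mpr (ConGen.Rel.of _ _ ⟨i, j, rfl, rfl⟩)

lemma list_do_eq_map {β : Type} (g : ℕ → β) (l : List ℕ) :
    (do let a ← l; pure (g a)) = l.map g := by
  induction l <;> simp_all

lemma aux_pow {M : Type*} [Monoid M] (a b : M) (t : ℕ) :
    a * (b * a) ^ t * b = (a * b) ^ (t + 1) := by
  induction t with
  | zero => simp
  | succ t ih =>
      have : a * (b * a) ^ (t + 1) * b = (a * (b * a) ^ t * b) * (a * b) := by
        rw [pow_succ]; simp [mul_assoc]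
      rw [this, ih, ← pow_succ]

/-- For a cycle ((i₀,j₀),…,(i_{k-1},j_{k-1})) of θ, setting
u₀ = i_{k-1}⋯i₁i₀ and v₀ = j₀j₁⋯j_{k-1}, one has e_{u₀} f_{v₀} = f_{v₀} e_{u₀}. -/
theorem cycle_gives_commuting_pair {m n : ℕ} (θ : Equiv.Perm (Fin m × Fin n))
    (k : ℕ) (hk : 0 < k) (is : ZMod k → Fin m) (js : ZMod k → Fin n)
    (hcycle : ∀ s : ZMod k, θ (is s, js s) = (is (s + 1), js (s + 1))) :
    FTheta.eWord θ (((List.range k).map (fun s => is (s : ZMod k))).reverse) *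
        FTheta.fWord θ ((List.range k).map (fun s => js (s : ZMod k))) =
      FTheta.fWord θ ((List.range k).map (fun s => js (s : ZMod k))) *
        FTheta.eWord θ (((List.range k).map (fun s => is (s : ZMod k))).reverse) := by
  have rel : ∀ s : ZMod k,
      FTheta.E θ (is s) * FTheta.F θ (js s) =
        FTheta.F θ (js (s + 1)) * FTheta.E θ (is (s + 1)) := by
    intro s
    have := FTheta.basic_rel θ (is s) (js s)
    rwa [hcycle s] at this
  set C : ℕ → List (ZMod k) := fun t => (List.range t).map (Nat.cast : ℕ → ZMod k) with hC
  -- Lemma A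
  have lemA : ∀ t : ℕ,
      FTheta.eWord θ (((C (t + 1)).map is).reverse) * FTheta.fWord θ ((C (t + 1)).map js) =
        (FTheta.E θ (is (t : ZMod k)) * FTheta.F θ (js (t : ZMod k))) ^ (t + 1) := by
    intro t
    induction t with
    | zero => simp [hC, FTheta.eWord, FTheta.fWord, List.range_succ]
    | succ t ih =>
        have hrange : List.range (t + 2) = List.range (t + 1) ++ [t + 1] :=
          @List.range_succ (t + 1)
        have hCsucc : C (t + 2) = C (t + 1) ++ [((t + 1 : ℕ) : ZMod k)] := by
          rw [hC]; simp [hrange]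
        have hE : FTheta.eWord θ (((C (t + 2)).map is).reverse)
            = FTheta.E θ (is ((t + 1 : ℕ) : ZMod k)) *
              FTheta.eWord θ (((C (t + 1)).map is).reverse) := by
          rw [hCsucc]; simp [FTheta.eWord]
        have hF : FTheta.fWord θ ((C (t + 2)).map js)
            = FTheta.fWord θ ((C (t + 1)).map js) * FTheta.F θ (js ((t + 1 : ℕ) : ZMod k)) := by
          rw [hCsucc]; simp [FTheta.fWord]
        have hcast : ((t + 1 : ℕ) : ZMod k) = (t : ZMod k) + 1 := by push_cast; ring
        rw [hE, hF, mul_assoc, ← mul_assoc (FTheta.eWord θ _), ih, hcast,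
          rel (t : ZMod k), ← mul_assoc]
        exact aux_pow _ _ (t + 1)
  -- Lemma B (with offset)
  have lemB : ∀ t : ℕ, ∀ a : ZMod k,
      FTheta.fWord θ ((C (t + 1)).map (fun s => js (a + s))) *
          FTheta.eWord θ (((C (t + 1)).map (fun s => is (a + s))).reverse) =
        (FTheta.F θ (js a) * FTheta.E θ (is a)) ^ (t + 1) := by
    intro t
    induction t with
    | zero => intro a; simp [hC, FTheta.eWord, FTheta.fWord, List.range_succ]
    | succ t ih =>
        intro a
        have hlistJ : (C (t + 2)).map (fun s => js (a + s))
            = js a :: (C (t + 1)).map (fun s => js ((a + 1) + s)) := by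
          rw [hC]
          show ((List.range (t + 2)).map (Nat.cast : ℕ → ZMod k)).map _
              = _ :: ((List.range (t + 1)).map (Nat.cast : ℕ → ZMod k)).map _
          rw [@List.range_succ_eq_map (t + 1)]
          simp only [List.map_cons, List.map_map, Nat.cast_zero, add_zero]
          congr 1
          apply List.map_congr_left
          intro x _
          simp only [Function.comp_apply]
          congr 1
          push_cast
          ring
        have hlistI : (C (t + 2)).map (fun s => is (a + s))
            = is a :: (C (t + 1)).map (fun s => is ((a + 1) + s)) := by
          rw [hC]
          show ((List.range (t + 2)).map (Nat.cast : ℕ → ZMod k)).map _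
              = _ :: ((List.range (t + 1)).map (Nat.cast : ℕ → ZMod k)).map _
          rw [@List.range_succ_eq_map (t + 1)]
          simp only [List.map_cons, List.map_map, Nat.cast_zero, add_zero]
          congr 1
          apply List.map_congr_left
          intro x _
          simp only [Function.comp_apply]
          congr 1
          push_cast
          ring
        have hF : FTheta.fWord θ ((C (t + 2)).map (fun s => js (a + s)))
            = FTheta.F θ (js a) *
              FTheta.fWord θ ((C (t + 1)).map (fun s => js ((a + 1) + s))) := by
          rw [hlistJ]; simp [FTheta.fWord]
        have hE : FTheta.eWord θ (((C (t + 2)).map (fun s => is (a + s))).reverse)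
            = FTheta.eWord θ (((C (t + 1)).map (fun s => is ((a + 1) + s))).reverse) *
              FTheta.E θ (is a) := by
          rw [hlistI]; simp [FTheta.eWord]
        rw [hF, hE, mul_assoc, ← mul_assoc (FTheta.fWord θ _), ih (a + 1), ← rel a,
          ← mul_assoc]
        exact aux_pow _ _ (t + 1)
  obtain ⟨t, rfl⟩ : ∃ t, k = t + 1 := ⟨k - 1, (Nat.succ_pred_eq_of_pos hk).symm⟩
  rw [show (do let a ← List.range (t + 1); pure ((a : ZMod (t + 1)))) = C (t + 1) from
    list_do_eq_map _ _]
  have hB := lemB t 0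
  simp only [zero_add] at hB
  rw [lemA t, hB]
  have h0 : ((t : ZMod (t + 1)) + 1) = 0 := by
    have := ZMod.natCast_self (t + 1)
    push_cast at this
    linear_combination this
  rw [rel (t : ZMod (t + 1)), h0]
end

section
/- In the forward 3-cycle semigroup (relations f_j e_i = e_{i+j} f_i with indices in ℤ/2), for any word u = i_1 i_2 ⋯ i_k over ℤ/2 and any r ≥ 0, pulling the word u through r single f-letters transforms u into the word whose s-th letter is Σ_{p≥0} C(r,p)·i_{s-p} (indices mod k, arithmetic mod 2), where C(r,p) are binomial coefficients. In particular, if k = 2ⁿ − 1 and the word u satisfies i_1 + i_2 + ⋯ + i_k ≡ 0 (mod 2), then there is a word v of length k in the f-generators such that e_u f_v = f_v e_u. -/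
/-- The permutation of (ℤ/2)² giving the forward 3-cycle semigroup: the relations
f_j e_i = e_{i+j} f_i read e_a f_b = f_{a+b} e_b, i.e. θ(a,b) = (b, a+b). -/
def fwdTheta : Equiv.Perm (ZMod 2 × ZMod 2) where
  toFun p := (p.2, p.1 + p.2)
  invFun p := (p.1 + p.2, p.1)
  left_inv := by decide
  right_inv := by decide

/-- The word i₁ i₂ ⋯ i_k (letters indexed cyclically). -/
def wordOf (k : ℕ) (g : ZMod k → ZMod 2) : List (ZMod 2) :=
  (List.range k).map (fun s => g ((s : ZMod k) + 1))

/-- The result of pulling the cyclic word i through r single f-letters: the s-th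
letter is ∑_p C(r,p)·i_{s-p}. -/
def pulled (k : ℕ) (i : ZMod k → ZMod 2) (r : ℕ) (s : ZMod k) : ZMod 2 :=
  ∑ p ∈ Finset.range (r + 1), (r.choose p : ZMod 2) * i (s - (p : ZMod k))

namespace ForwardPull

lemma wordOf_eq (k : ℕ) (g : ZMod k → ZMod 2) :
    wordOf k g = (List.range k).map (fun s : ℕ => g ((Nat.cast s : ZMod k) + 1)) := by
  simp [wordOf, ← List.map_eq_flatMap, List.map_map, Function.comp_def]

lemma eWord_nil : FTheta.eWord fwdTheta [] = 1 := rfl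

lemma eWord_cons (a : ZMod 2) (l : List (ZMod 2)) :
    FTheta.eWord fwdTheta (a :: l) = FTheta.E fwdTheta a * FTheta.eWord fwdTheta l := by
  simp [FTheta.eWord]

lemma fWord_cons (a : ZMod 2) (l : List (ZMod 2)) :
    FTheta.fWord fwdTheta (a :: l) = FTheta.F fwdTheta a * FTheta.fWord fwdTheta l := by
  simp [FTheta.fWord]

lemma ef_rel (a b : ZMod 2) :
    FTheta.E fwdTheta a * FTheta.F fwdTheta b =
      FTheta.F fwdTheta (a + b) * FTheta.E fwdTheta b := by
  have h : (conGen (twoGraphRel fwdTheta))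
      (FreeMonoid.of (TwoGraphGen.e a) * FreeMonoid.of (TwoGraphGen.f b))
      (FreeMonoid.of (TwoGraphGen.f (fwdTheta (a, b)).2) *
        FreeMonoid.of (TwoGraphGen.e (fwdTheta (a, b)).1)) :=
    ConGen.Rel.of _ _ ⟨a, b, rfl, rfl⟩
  have h2 := (Con.eq _).mpr h
  simp only [Con.coe_mul] at h2
  exact h2

lemma fe_rel (c b : ZMod 2) :
    FTheta.F fwdTheta c * FTheta.E fwdTheta b =
      FTheta.E fwdTheta (b + c) * FTheta.F fwdTheta b := by
  have hb : b + c + b = c := by revert b c; decide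
  have := (ef_rel (b + c) b).symm
  rw [hb] at this
  exact this

def accum : ZMod 2 → List (ZMod 2) → List (ZMod 2)
  | _, [] => []
  | c, a :: t => (a + c) :: accum a t

def lastD : ZMod 2 → List (ZMod 2) → ZMod 2
  | c, [] => c
  | _, a :: t => lastD a t

lemma pull (l : List (ZMod 2)) (c : ZMod 2) :
    FTheta.F fwdTheta c * FTheta.eWord fwdTheta l =
      FTheta.eWord fwdTheta (accum c l) * FTheta.F fwdTheta (lastD c l) := by
  induction l generalizing c with
  | nil => simp [eWord_nil, accum, lastD]
  | cons a t ih =>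
      rw [accum, lastD, eWord_cons, eWord_cons, ← mul_assoc, fe_rel, mul_assoc, ih a, ← mul_assoc]

lemma accum_range' (h : ℕ → ZMod 2) : ∀ (m t : ℕ),
    accum (h t) ((List.range' (t + 1) m).map h) =
      (List.range' t m).map (fun s => h (s + 1) + h s)
  | 0, t => rfl
  | m + 1, t => by
      rw [List.range'_succ, List.range'_succ, List.map_cons, List.map_cons, accum]
      exact congrArg _ (accum_range' h m (t + 1))

lemma lastD_range' (h : ℕ → ZMod 2) : ∀ (m t : ℕ),
    lastD (h t) ((List.range' (t + 1) m).map h) = h (t + m)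
  | 0, t => rfl
  | m + 1, t => by
      rw [List.range'_succ, List.map_cons, lastD]
      rw [lastD_range' h m (t + 1)]
      congr 1
      omega

lemma sum_id (A : ℕ → ZMod 2) (r : ℕ) :
    ∑ p ∈ Finset.range (r + 2), (((r + 1).choose p : ℕ) : ZMod 2) * A p
      = ∑ p ∈ Finset.range (r + 1), ((r.choose p : ℕ) : ZMod 2) * A p
        + ∑ p ∈ Finset.range (r + 1), ((r.choose p : ℕ) : ZMod 2) * A (p + 1) := by
  rw [Finset.sum_range_succ' (fun p => (((r + 1).choose p : ℕ) : ZMod 2) * A p) (r + 1)]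
  simp only [Nat.choose_succ_succ, Nat.cast_add, add_mul, Nat.choose_zero_right, Nat.cast_one,
    one_mul]
  rw [Finset.sum_add_distrib,
    Finset.sum_range_succ (fun p => ((r.choose (p + 1) : ℕ) : ZMod 2) * A (p + 1)) r]
  simp only [Nat.choose_succ_self, Nat.cast_zero, zero_mul, add_zero]
  rw [Finset.sum_range_succ' (fun p => ((r.choose p : ℕ) : ZMod 2) * A p) r]
  simp only [Nat.choose_zero_right, Nat.cast_one, one_mul]
  ring

lemma pulled_succ (k : ℕ) (i : ZMod k → ZMod 2) (r : ℕ) (x : ZMod k) :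
    pulled k i (r + 1) x = pulled k i r x + pulled k i r (x - 1) := by
  unfold pulled
  rw [show r + 1 + 1 = r + 2 from rfl, sum_id (fun p => i (x - (p : ZMod k))) r]
  congr 1
  refine Finset.sum_congr rfl fun p _ => ?_
  congr 1
  push_cast
  ring

lemma choose_two_pow_sub_one (n : ℕ) : ∀ p : ℕ, p ≤ 2 ^ n - 1 →
    (((2 ^ n - 1).choose p : ℕ) : ZMod 2) = 1 := by
  induction n with
  | zero => intro p hp; interval_cases p; simp
  | succ n ih =>
    intro p hp
    have h1 : (1:ℕ) ≤ 2 ^ n := Nat.one_le_two_pow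
    have h2 : (2:ℕ) ^ (n + 1) - 1 = 2 * (2 ^ n - 1) + 1 := by
      have : (2:ℕ) ^ (n + 1) = 2 * 2 ^ n := by ring
      omega
    haveI : Fact (Nat.Prime 2) := ⟨Nat.prime_two⟩
    have lucas := Choose.choose_modEq_choose_mod_mul_choose_div
      (p := 2) (n := 2 ^ (n + 1) - 1) (k := p)
    have hcast : (((2 ^ (n + 1) - 1).choose p : ℕ) : ZMod 2)
        = ((((2 ^ (n + 1) - 1) % 2).choose (p % 2) * ((2 ^ (n + 1) - 1) / 2).choose (p / 2) : ℕ)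
            : ZMod 2) := by
      have := (ZMod.intCast_eq_intCast_iff _ _ _).mpr lucas
      push_cast at this ⊢
      exact_mod_cast this
    have hm : (2 ^ (n + 1) - 1) % 2 = 1 := by omega
    have hd : (2 ^ (n + 1) - 1) / 2 = 2 ^ n - 1 := by omega
    rw [hcast, hm, hd, Nat.cast_mul]
    have hone : ((1:ℕ).choose (p % 2)) = 1 := by
      rcases Nat.mod_two_eq_zero_or_one p with h | h <;> simp [h]
    rw [hone, ih (p / 2) (by omega), Nat.cast_one, one_mul]

lemma sum_range_cast {k : ℕ} [NeZero k] (f : ZMod k → ZMod 2) :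
    ∑ p ∈ Finset.range k, f (p : ZMod k) = ∑ t : ZMod k, f t := by
  refine Finset.sum_nbij' (i := fun p => ((p : ℕ) : ZMod k)) (j := fun t => t.val)
    ?_ ?_ ?_ ?_ ?_
  · intro p _; exact Finset.mem_univ _
  · intro t _; exact Finset.mem_range.mpr (ZMod.val_lt t)
  · intro p hp; exact ZMod.val_cast_of_lt (Finset.mem_range.mp hp)
  · intro t _; exact ZMod.natCast_rightInverse t
  · intro p _; rfl

lemma pulled_eq_self (k n : ℕ) (hk : 0 < k) (hkn : k = 2 ^ n - 1) (i : ZMod k → ZMod 2)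
    (hsum : (∑ s ∈ Finset.range k, i ((s : ZMod k) + 1)) = 0) (s : ZMod k) :
    pulled k i k s = i s := by
  haveI : NeZero k := ⟨hk.ne'⟩
  unfold pulled
  have hC : ∀ p ∈ Finset.range (k + 1), ((k.choose p : ℕ) : ZMod 2) * i (s - (p : ZMod k))
      = i (s - (p : ZMod k)) := by
    intro p hp
    have hpk : p ≤ 2 ^ n - 1 := by have := Finset.mem_range.mp hp; omega
    rw [show k.choose p = (2 ^ n - 1).choose p by rw [hkn],
      choose_two_pow_sub_one n p hpk, one_mul]
  rw [Finset.sum_congr rfl hC, Finset.sum_range_succ, ZMod.natCast_self, sub_zero]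
  have h1 : ∑ p ∈ Finset.range k, i (s - (p : ZMod k)) = ∑ t : ZMod k, i t := by
    rw [sum_range_cast (fun t => i (s - t))]
    exact Equiv.sum_comp (Equiv.subLeft s) i
  have h2 : ∑ p ∈ Finset.range k, i ((p : ZMod k) + 1) = ∑ t : ZMod k, i t := by
    rw [sum_range_cast (fun t => i (t + 1))]
    exact Equiv.sum_comp (Equiv.addRight 1) i
  rw [h1, ← h2, hsum, zero_add]

end ForwardPull

/-- In the forward 3-cycle semigroup, pulling a cyclic word u of length k
through r single f-letters yields the word with s-th letter ∑_p C(r,p)·i_{s-p}; and if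
k = 2ⁿ - 1 and the letters of u sum to 0 mod 2, then there is a word v of length k in
the f-generators with e_u f_v = f_v e_u. -/


theorem forward_three_cycle_pulling (k : ℕ) (hk : 0 < k) (i : ZMod k → ZMod 2) :
    (∀ r : ℕ,
      FTheta.F fwdTheta (pulled k i r 0) *
          FTheta.eWord fwdTheta (wordOf k (pulled k i r)) =
        FTheta.eWord fwdTheta (wordOf k (pulled k i (r + 1))) *
          FTheta.F fwdTheta (pulled k i r 0)) ∧
    (∀ n : ℕ, k = 2 ^ n - 1 →
      (∑ s ∈ Finset.range k, i ((s : ZMod k) + 1)) = 0 →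
      ∃ v : List (ZMod 2), v.length = k ∧
        FTheta.eWord fwdTheta (wordOf k i) * FTheta.fWord fwdTheta v =
          FTheta.fWord fwdTheta v * FTheta.eWord fwdTheta (wordOf k i)) := by
  have part1 : ∀ r : ℕ,
      FTheta.F fwdTheta (pulled k i r 0) *
          FTheta.eWord fwdTheta (wordOf k (pulled k i r)) =
        FTheta.eWord fwdTheta (wordOf k (pulled k i (r + 1))) *
          FTheta.F fwdTheta (pulled k i r 0) := by
    intro r
    set H : ℕ → ZMod 2 := fun s => pulled k i r ((s : ℕ) : ZMod k) with hH
    have hrange : List.range' 1 k = (List.range k).map (1 + ·) := by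
      rw [List.range_eq_range', List.map_add_range']
    have hw : wordOf k (pulled k i r) = (List.range' 1 k).map H := by
      rw [ForwardPull.wordOf_eq, hrange]
      simp only [List.map_map]
      refine List.map_congr_left fun s _ => ?_
      simp only [Function.comp_apply, hH]
      congr 1
      push_cast
      ring
    have hH0 : H 0 = pulled k i r 0 := by simp [hH]
    have hacc : ForwardPull.accum (H 0) ((List.range' 1 k).map H)
        = (List.range' 0 k).map (fun s => H (s + 1) + H s) := by
      simpa using ForwardPull.accum_range' H k 0
    have hlast : ForwardPull.lastD (H 0) ((List.range' 1 k).map H) = pulled k i r 0 := by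
      have := ForwardPull.lastD_range' H k 0
      simp only [zero_add] at this
      rw [this]
      show pulled k i r ((k : ℕ) : ZMod k) = pulled k i r 0
      rw [ZMod.natCast_self]
    have hnew : wordOf k (pulled k i (r + 1))
        = (List.range' 0 k).map (fun s => H (s + 1) + H s) := by
      rw [← List.range_eq_range', ForwardPull.wordOf_eq]
      refine List.map_congr_left fun s _ => ?_
      simp only [Function.comp_apply, hH]
      rw [ForwardPull.pulled_succ, show ((s : ZMod k) + 1 - 1 : ZMod k) = (s : ZMod k) by ring,
        show ((s : ZMod k) + 1 : ZMod k) = ((s + 1 : ℕ) : ZMod k) by push_cast; ring]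
    rw [hw, ← hH0, ForwardPull.pull, hacc, hlast, hH0, hnew]
  refine ⟨part1, ?_⟩
  intro n hkn hsum
  have main : ∀ r : ℕ,
      FTheta.fWord fwdTheta ((List.range r).reverse.map (fun j => pulled k i j 0)) *
          FTheta.eWord fwdTheta (wordOf k (pulled k i 0))
        = FTheta.eWord fwdTheta (wordOf k (pulled k i r)) *
          FTheta.fWord fwdTheta ((List.range r).reverse.map (fun j => pulled k i j 0)) := by
    intro r
    induction r with
    | zero => simp [FTheta.fWord]
    | succ r ih =>
      have hsplit : (List.range (r + 1)).reverse.map (fun j => pulled k i j 0)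
          = pulled k i r 0 :: (List.range r).reverse.map (fun j => pulled k i j 0) := by
        rw [List.range_succ, List.reverse_append]
        simp
      rw [hsplit, ForwardPull.fWord_cons, mul_assoc, ih, ← mul_assoc, part1 r, mul_assoc,
        ← ForwardPull.fWord_cons]
  have hW0 : pulled k i 0 = i := by funext x; simp [pulled]
  have hWk : pulled k i k = i := funext (ForwardPull.pulled_eq_self k n hk hkn i hsum)
  refine ⟨(List.range k).reverse.map (fun j => pulled k i j 0), by simp, ?_⟩
  have := main k
  rw [hW0, hWk] at this
  exact this.symm
end

section
/- For every N, the single-vertex 2-graph semigroup F_θ⁺ contains commuting elements e_u and f_v (u a word in the e's, v a word in the f's, both of length N!·t for some t ≥ 1) such that the associated ring-by-ring symmetry quotient group has order at least N. Concretely: the induced permutation θ' of {1,…,m}^{N!} × {1,…,n}^{N!} (defined by e_u f_v = f_{v'} e_{u'} iff θ'(u,v) = (u',v')) either is the identity — in which case any primitive u of length N! satisfies e_u f_v = f_v e_u for appropriate v with trivial shift-symmetry beyond order N! — or θ' has a cycle of length t ≥ 2, producing a commuting pair on C_{N!·t} whose symmetry subgroup ⟨p⟩ satisfies p ≥ N+1.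 -/
/-! ### auxiliary machinery -/

namespace TGAux

variable {I J : Type}

/-- Push a single `f`-letter leftwards through an `e`-word. -/
def stepF (θ : Equiv.Perm (I × J)) : List I → J → List I × J
  | [], j => ([], j)
  | a :: u, j =>
      ((θ (a, (stepF θ u j).2)).1 :: (stepF θ u j).1, (θ (a, (stepF θ u j).2)).2)

/-- Push a whole `f`-word leftwards through an `e`-word. -/
def stepV (θ : Equiv.Perm (I × J)) : List I → List J → List I × List J
  | u, [] => (u, [])
  | u, b :: v =>
      ((stepV θ (stepF θ u b).1 v).1, (stepF θ u b).2 :: (stepV θ (stepF θ u b).1 v).2)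

def invF (θ : Equiv.Perm (I × J)) : List I → J → List I × J
  | [], j => ([], j)
  | c :: u', j =>
      ((θ.symm (c, j)).1 :: (invF θ u' (θ.symm (c, j)).2).1,
        (invF θ u' (θ.symm (c, j)).2).2)

def invV (θ : Equiv.Perm (I × J)) : List I → List J → List I × List J
  | u, [] => (u, [])
  | u, b :: v =>
      ((invF θ (invV θ u v).1 b).1,
        (invF θ (invV θ u v).1 b).2 :: (invV θ u v).2)

variable (θ : Equiv.Perm (I × J))

theorem stepF_length (u : List I) (j : J) : (stepF θ u j).1.length = u.length := by
  induction u with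
  | nil => rfl
  | cons a u ih => simp [stepF, ih]

theorem stepV_fst_length (v : List J) : ∀ u : List I, (stepV θ u v).1.length = u.length := by
  induction v with
  | nil => intro u; rfl
  | cons b v ih => intro u; simp [stepV, ih, stepF_length]

theorem stepV_snd_length (v : List J) : ∀ u : List I, (stepV θ u v).2.length = v.length := by
  induction v with
  | nil => intro u; rfl
  | cons b v ih => intro u; simp [stepV, ih]

theorem invF_stepF (u : List I) (j : J) :
    invF θ (stepF θ u j).1 (stepF θ u j).2 = (u, j) := by
  induction u with
  | nil => rfl
  | cons a u ih => simp [stepF, invF, ih]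

theorem invV_stepV (v : List J) : ∀ u : List I,
    invV θ (stepV θ u v).1 (stepV θ u v).2 = (u, v) := by
  induction v with
  | nil => intro u; rfl
  | cons b v ih => intro u; simp [stepV, invV, ih, invF_stepF]

theorem stepV_nil_left (v : List J) : stepV θ ([] : List I) v = ([], v) := by
  induction v with
  | nil => rfl
  | cons b v ih => simp [stepV, stepF, ih]

theorem stepF_append (u w : List I) (j : J) :
    stepF θ (u ++ w) j =
      ((stepF θ u (stepF θ w j).2).1 ++ (stepF θ w j).1, (stepF θ u (stepF θ w j).2).2) := by
  induction u with
  | nil => simp [stepF]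
  | cons a u ih => simp [stepF, ih]

theorem stepV_append_left (v : List J) : ∀ u w : List I,
    stepV θ (u ++ w) v =
      ((stepV θ u (stepV θ w v).2).1 ++ (stepV θ w v).1,
        (stepV θ u (stepV θ w v).2).2) := by
  induction v with
  | nil => intro u w; rfl
  | cons b v ih => intro u w; simp [stepV, stepF_append, ih]

theorem stepV_append_right (v : List J) : ∀ (u : List I) (w : List J),
    stepV θ u (v ++ w) =
      ((stepV θ (stepV θ u v).1 w).1,
        (stepV θ u v).2 ++ (stepV θ (stepV θ u v).1 w).2) := by
  induction v with
  | nil => intro u w; rfl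
  | cons b v ih => intro u w; simp [stepV, ih]

/-! commutation in the quotient monoid -/

theorem eWord_nil : FTheta.eWord θ ([] : List I) = 1 := rfl

theorem eWord_cons (a : I) (u : List I) :
    FTheta.eWord θ (a :: u) = FTheta.E θ a * FTheta.eWord θ u := by
  simp [FTheta.eWord]

theorem fWord_nil : FTheta.fWord θ ([] : List J) = 1 := rfl

theorem fWord_cons (b : J) (v : List J) :
    FTheta.fWord θ (b :: v) = FTheta.F θ b * FTheta.fWord θ v := by
  simp [FTheta.fWord]

theorem EF_comm (i : I) (j : J) :
    FTheta.E θ i * FTheta.F θ j = FTheta.F θ (θ (i, j)).2 * FTheta.E θ (θ (i, j)).1 := by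
  show (conGen (twoGraphRel θ)).mk' _ * (conGen (twoGraphRel θ)).mk' _ =
      (conGen (twoGraphRel θ)).mk' _ * (conGen (twoGraphRel θ)).mk' _
  rw [← map_mul, ← map_mul]
  exact (Con.eq _).mpr (ConGen.Rel.of _ _ ⟨i, j, rfl, rfl⟩)

theorem eF_comm (u : List I) (j : J) :
    FTheta.eWord θ u * FTheta.F θ j =
      FTheta.F θ (stepF θ u j).2 * FTheta.eWord θ (stepF θ u j).1 := by
  induction u with
  | nil => simp [stepF, eWord_nil]
  | cons a u ih =>
      rw [eWord_cons, mul_assoc, ih, ← mul_assoc, EF_comm]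
      show _ = FTheta.F θ (θ (a, (stepF θ u j).2)).2 *
        FTheta.eWord θ ((θ (a, (stepF θ u j).2)).1 :: (stepF θ u j).1)
      rw [eWord_cons, mul_assoc]

theorem eV_comm (v : List J) : ∀ u : List I,
    FTheta.eWord θ u * FTheta.fWord θ v =
      FTheta.fWord θ (stepV θ u v).2 * FTheta.eWord θ (stepV θ u v).1 := by
  induction v with
  | nil => intro u; simp [stepV, fWord_nil]
  | cons b v ih =>
      intro u
      rw [fWord_cons, ← mul_assoc, eF_comm, mul_assoc, ih]
      show _ = FTheta.fWord θ ((stepF θ u b).2 :: (stepV θ (stepF θ u b).1 v).2) *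
        FTheta.eWord θ (stepV θ (stepF θ u b).1 v).1
      rw [fWord_cons, mul_assoc]

/-! blocks -/

def blocksDesc {α : Type} (u : ℕ → List α) (a : ℕ) : ℕ → List α
  | 0 => []
  | k + 1 => u (a + k) ++ blocksDesc u a k

def blocksAsc {α : Type} (u : ℕ → List α) : ℕ → ℕ → List α
  | _, 0 => []
  | a, k + 1 => u a ++ blocksAsc u (a + 1) k

theorem blocksDesc_length {α : Type} {u : ℕ → List α} {K : ℕ}
    (h : ∀ s, (u s).length = K) (k a : ℕ) : (blocksDesc u a k).length = k * K := by
  induction k with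
  | zero => simp [blocksDesc]
  | succ k ih => simp [blocksDesc, h, ih]; ring

theorem blocksAsc_length {α : Type} {u : ℕ → List α} {K : ℕ}
    (h : ∀ s, (u s).length = K) (k : ℕ) : ∀ a, (blocksAsc u a k).length = k * K := by
  induction k with
  | zero => intro a; simp [blocksAsc]
  | succ k ih => intro a; simp [blocksAsc, h, ih]; ring

theorem blocksDesc_snoc {α : Type} (u : ℕ → List α) (k : ℕ) : ∀ a,
    blocksDesc u a (k + 1) = blocksDesc u (a + 1) k ++ u a := by
  induction k with
  | zero => intro a; simp [blocksDesc]
  | succ k ih =>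
      intro a
      show u (a + (k+1)) ++ blocksDesc u a (k+1) = (u (a + 1 + k) ++ blocksDesc u (a+1) k) ++ u a
      rw [ih a, ← List.append_assoc, show a + (k+1) = a + 1 + k by omega]

theorem blocksAsc_snoc {α : Type} (u : ℕ → List α) (k : ℕ) : ∀ a,
    blocksAsc u a (k + 1) = blocksAsc u a k ++ u (a + k) := by
  induction k with
  | zero => intro a; simp [blocksAsc]
  | succ k ih =>
      intro a
      show u a ++ blocksAsc u (a+1) (k+1) = (u a ++ blocksAsc u (a+1) k) ++ u (a + (k+1))
      rw [ih (a+1), ← List.append_assoc, show a + 1 + k = a + (k+1) by omega]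

theorem blocksDesc_shift {α : Type} {u : ℕ → List α} {t : ℕ}
    (hp : ∀ s, u (s + t) = u s) (k a : ℕ) :
    blocksDesc u (a + t) k = blocksDesc u a k := by
  induction k with
  | zero => rfl
  | succ k ih =>
      show u (a + t + k) ++ blocksDesc u (a+t) k = u (a + k) ++ blocksDesc u a k
      rw [ih, show a + t + k = (a + k) + t by omega, hp]

theorem blocksDesc_peel {α : Type} {u : ℕ → List α} {K : ℕ}
    (h : ∀ s, (u s).length = K) (k : ℕ) : ∀ a,
    blocksDesc u a k = blocksDesc u (a + 1) k → ∀ j, j < k → u (a + j) = u (a + 1 + j) := by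
  induction k with
  | zero => intro a _ j hj; omega
  | succ k ih =>
      intro a heq j hj
      have h2 := List.append_inj heq (by rw [h, h])
      rcases Nat.lt_or_ge j k with hjk | hjk
      · exact ih a h2.2 j hjk
      · have : j = k := by omega
        subst this
        exact h2.1

theorem blocksAsc_peel {α : Type} {u : ℕ → List α} {K : ℕ}
    (h : ∀ s, (u s).length = K) (k : ℕ) : ∀ a,
    blocksAsc u a k = blocksAsc u (a + 1) k → ∀ j, j < k → u (a + j) = u (a + 1 + j) := by
  induction k with
  | zero => intro a _ j hj; omega
  | succ k ih =>
      intro a heq j hj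
      have h2 := List.append_inj heq (by rw [h, h])
      rcases Nat.eq_zero_or_pos j with rfl | hj0
      · simpa using h2.1
      · obtain ⟨j', rfl⟩ : ∃ j', j = j' + 1 := ⟨j - 1, by omega⟩
        have := ih (a+1) h2.2 j' (by omega)
        rw [show a + (j' + 1) = a + 1 + j' by omega, this]
        congr 1
        omega

/-! rotation lemmas -/

theorem rotate_mul {α : Type} {l : List α} {a : ℕ} (h : l.rotate a = l) (c : ℕ) :
    l.rotate (a * c) = l := by
  induction c with
  | zero => simp
  | succ c ih => rw [Nat.mul_succ, ← List.rotate_rotate, ih, h]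

theorem rotate_gcd {α : Type} {l : List α} (a b : ℕ) :
    l.rotate a = l → l.rotate b = l → l.rotate (Nat.gcd a b) = l := by
  induction a, b using Nat.gcd.induction with
  | H0 n => intro _ h2; simpa using h2
  | H1 m n hm ih =>
      intro h1 h2
      rw [Nat.gcd_rec]
      apply ih _ h1
      have h4 : l.rotate (m * (n / m)) = l := rotate_mul h1 _
      calc l.rotate (n % m) = (l.rotate (m * (n / m))).rotate (n % m) := by rw [h4]
        _ = l.rotate (m * (n / m) + n % m) := List.rotate_rotate _ _ _
        _ = l.rotate n := by rw [Nat.div_add_mod]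
        _ = l := h2

/-! pushing blocks -/

theorem pushBlock {u : ℕ → List I} {v : ℕ → List J}
    (H : ∀ s, stepV θ (u s) (v s) = (u (s + 1), v (s + 1))) (k : ℕ) : ∀ a,
    stepV θ (blocksDesc u a k) (v a) = (blocksDesc u (a + 1) k, v (a + k)) := by
  induction k with
  | zero => intro a; simp [blocksDesc, stepV_nil_left]
  | succ k ih =>
      intro a
      show stepV θ (u (a + k) ++ blocksDesc u a k) (v a) = _
      rw [stepV_append_left]
      rw [show (stepV θ (blocksDesc u a k) (v a)) = (blocksDesc u (a+1) k, v (a + k)) from ih a]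
      show ((stepV θ (u (a+k)) (v (a+k))).1 ++ blocksDesc u (a+1) k,
        (stepV θ (u (a+k)) (v (a+k))).2) = _
      rw [H (a + k)]
      show (u (a + k + 1) ++ blocksDesc u (a+1) k, v (a + k + 1)) =
        (u (a + 1 + k) ++ blocksDesc u (a+1) k, v (a + (k+1)))
      rw [show a + k + 1 = a + 1 + k by omega, show a + 1 + k = a + (k + 1) by omega]

theorem pushAll {u : ℕ → List I} {v : ℕ → List J} {t : ℕ}
    (H : ∀ s, stepV θ (u s) (v s) = (u (s + 1), v (s + 1)))
    (hv : ∀ s, v (s + t) = v s) (k : ℕ) : ∀ a,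
    stepV θ (blocksDesc u a t) (blocksAsc v a k) = (blocksDesc u (a + k) t, blocksAsc v a k) := by
  induction k with
  | zero => intro a; rfl
  | succ k ih =>
      intro a
      show stepV θ (blocksDesc u a t) (v a ++ blocksAsc v (a+1) k) = _
      rw [stepV_append_right, pushBlock θ H t a, hv a]
      show ((stepV θ (blocksDesc u (a+1) t) (blocksAsc v (a+1) k)).1,
        v a ++ (stepV θ (blocksDesc u (a+1) t) (blocksAsc v (a+1) k)).2) = _
      rw [ih (a+1)]
      show (blocksDesc u (a + 1 + k) t, v a ++ blocksAsc v (a+1) k) = _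
      rw [show a + 1 + k = a + (k + 1) by omega]
      rfl

/-! the finite dynamical system -/

def gendo (θ : Equiv.Perm (I × J)) (K : ℕ) :
    (List.Vector I K × List.Vector J K) → (List.Vector I K × List.Vector J K) :=
  fun p =>
    (⟨(stepV θ p.1.1 p.2.1).1, by rw [stepV_fst_length]; exact p.1.2⟩,
     ⟨(stepV θ p.1.1 p.2.1).2, by rw [stepV_snd_length]; exact p.2.2⟩)

theorem gendo_inj (K : ℕ) : Function.Injective (gendo θ K) := by
  intro p q h
  have h1 : (gendo θ K p).1.1 = (gendo θ K q).1.1 := by rw [h]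
  have h2 : (gendo θ K p).2.1 = (gendo θ K q).2.1 := by rw [h]
  have hst : stepV θ p.1.1 p.2.1 = stepV θ q.1.1 q.2.1 := Prod.ext h1 h2
  have := invV_stepV θ p.2.1 p.1.1
  rw [hst, invV_stepV θ q.2.1 q.1.1] at this
  have e1 : p.1.1 = q.1.1 := (Prod.ext_iff.mp this).1.symm
  have e2 : p.2.1 = q.2.1 := (Prod.ext_iff.mp this).2.symm
  exact Prod.ext (Subtype.ext e1) (Subtype.ext e2)

theorem gendo_period [Fintype I] [DecidableEq I] [Fintype J] [DecidableEq J]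
    (K : ℕ) : ∃ t : ℕ, 1 ≤ t ∧ (∀ x, (gendo θ K)^[t] x = x) ∧
      ((∃ x, gendo θ K x ≠ x) → 2 ≤ t) := by
  have hbij : Function.Bijective (gendo θ K) :=
    Finite.injective_iff_bijective.mp (gendo_inj θ K)
  set e : Equiv.Perm (List.Vector I K × List.Vector J K) :=
    Equiv.ofBijective _ hbij with he
  have hcoe : ∀ x, e x = gendo θ K x := fun x => rfl
  have hiter : ∀ (s : ℕ) (x), (gendo θ K)^[s] x = (e ^ s) x := by
    intro s
    induction s with
    | zero => intro x; simp
    | succ s ih =>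
        intro x
        rw [Function.iterate_succ_apply, ih (gendo θ K x), pow_succ, Equiv.Perm.mul_apply, hcoe]
  refine ⟨orderOf e, orderOf_pos e, ?_, ?_⟩
  · intro x
    rw [hiter, pow_orderOf_eq_one]
    rfl
  · rintro ⟨x, hx⟩
    by_contra h
    have h1 : orderOf e = 1 := by
      have := orderOf_pos e
      omega
    have : e ^ orderOf e = 1 := pow_orderOf_eq_one e
    rw [h1, pow_one] at this
    apply hx
    rw [← hcoe x, this]
    rfl

end TGAux

/-- For every N ≥ 1 there is a commuting pair e_u, f_v with
|u| = |v| = N!·t for some t ≥ 1 whose ring-by-ring symmetry quotient has order at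
least N; i.e. no common cyclic rotation of period d with 0 < d < N preserves both
labelings, so the symmetry quotient group of the associated cyclic group construction
has order at least N. -/
theorem arbitrarily_long_commuting_words {m n : ℕ} (hm : 2 ≤ m) (hn : 2 ≤ n)
    (θ : Equiv.Perm (Fin m × Fin n)) (N : ℕ) (hN : 0 < N) :
    ∃ (t : ℕ) (u : List (Fin m)) (v : List (Fin n)),
      1 ≤ t ∧
      u.length = N.factorial * t ∧ v.length = N.factorial * t ∧
      FTheta.eWord θ u * FTheta.fWord θ v = FTheta.fWord θ v * FTheta.eWord θ u ∧
      ∀ d : ℕ, 0 < d → d < N → ¬(u.rotate d = u ∧ v.rotate d = v) := by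
  classical
  set K := N.factorial with hKdef
  have hK : 0 < K := N.factorial_pos
  have hNK : N ≤ K := Nat.self_le_factorial N
  set u0 : List (Fin m) := (⟨1, by omega⟩ : Fin m) :: List.replicate (K - 1) ⟨0, by omega⟩
    with hu0
  set v0 : List (Fin n) := List.replicate K (⟨0, by omega⟩ : Fin n) with hv0
  have hu0len : u0.length = K := by simp [hu0]; omega
  have hv0len : v0.length = K := by simp [hv0]
  obtain ⟨t, ht1, hper0, ht2of⟩ := TGAux.gendo_period θ (I := Fin m) (J := Fin n) K
  set g := TGAux.gendo θ (I := Fin m) (J := Fin n) K with hg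
  set x0 : List.Vector (Fin m) K × List.Vector (Fin n) K :=
    (⟨u0, hu0len⟩, ⟨v0, hv0len⟩) with hx0
  have hper : g^[t] x0 = x0 := hper0 x0
  by_cases hfix : g x0 = x0
  · -- the base pair already commutes
    have hstep : TGAux.stepV θ u0 v0 = (u0, v0) := by
      have h1 : (g x0).1.1 = x0.1.1 := by rw [hfix]
      have h2 : (g x0).2.1 = x0.2.1 := by rw [hfix]
      exact Prod.ext h1 h2
    refine ⟨1, u0, v0, le_refl 1, by rw [hu0len, mul_one], by rw [hv0len, mul_one], ?_, ?_⟩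
    · have := TGAux.eV_comm θ v0 u0
      rw [hstep] at this
      exact this
    · rintro d hd0 hdN ⟨hru, -⟩
      obtain ⟨d', rfl⟩ : ∃ d', d = d' + 1 := ⟨d - 1, by omega⟩
      have hlt : 0 < (u0.rotate (d' + 1)).length := by
        rw [List.length_rotate, hu0len]; omega
      have hr := List.getElem_rotate u0 (d' + 1) 0 hlt
      simp only [hru] at hr
      have hmod : (0 + (d' + 1)) % u0.length = d' + 1 := by
        rw [hu0len, Nat.zero_add, Nat.mod_eq_of_lt (by omega)]
      simp only [hmod] at hr
      have hL : u0[0]'(by rw [hu0len]; omega) = (⟨1, by omega⟩ : Fin m) := by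
        simp [hu0]
      have hR : u0[d' + 1]'(by rw [hu0len]; omega) = (⟨0, by omega⟩ : Fin m) := by
        simp [hu0]
      rw [hL, hR] at hr
      exact absurd (congrArg Fin.val hr) (by simp)
  · -- nontrivial orbit
    have ht2 : 2 ≤ t := ht2of ⟨x0, hfix⟩
    set uu : ℕ → List (Fin m) := fun s => (g^[s] x0).1.1 with huu
    set vv : ℕ → List (Fin n) := fun s => (g^[s] x0).2.1 with hvv
    have hulen : ∀ s, (uu s).length = K := fun s => (g^[s] x0).1.2
    have hvlen : ∀ s, (vv s).length = K := fun s => (g^[s] x0).2.2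
    have hchain : ∀ s, TGAux.stepV θ (uu s) (vv s) = (uu (s + 1), vv (s + 1)) := by
      intro s
      have h1 : g^[s + 1] x0 = g (g^[s] x0) := Function.iterate_succ_apply' g s x0
      have e1 : uu (s + 1) = (g (g^[s] x0)).1.1 := by simp only [huu]; rw [h1]
      have e2 : vv (s + 1) = (g (g^[s] x0)).2.1 := by simp only [hvv]; rw [h1]
      rw [e1, e2]
      rfl
    have hIter : g^[t] x0 = x0 := hper
    have huper : ∀ s, uu (s + t) = uu s := by
      intro s
      have h : g^[s + t] x0 = g^[s] x0 := by rw [Function.iterate_add_apply, hIter]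
      simp only [huu, h]
    have hvper : ∀ s, vv (s + t) = vv s := by
      intro s
      have h : g^[s + t] x0 = g^[s] x0 := by rw [Function.iterate_add_apply, hIter]
      simp only [hvv, h]
    set U : List (Fin m) := TGAux.blocksDesc uu 0 t with hU
    set V : List (Fin n) := TGAux.blocksAsc vv 0 t with hV
    have hUlen : U.length = t * K := TGAux.blocksDesc_length hulen t 0
    have hVlen : V.length = t * K := TGAux.blocksAsc_length hvlen t 0
    have hstepUV : TGAux.stepV θ U V = (U, V) := by
      have hp := TGAux.pushAll θ hchain hvper t 0
      have hs : TGAux.blocksDesc uu (0 + t) t = TGAux.blocksDesc uu 0 t :=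
        TGAux.blocksDesc_shift huper t 0
      rw [hU, hV, hp, hs]
    refine ⟨t, U, V, by omega, by rw [hUlen]; ring, by rw [hVlen]; ring, ?_, ?_⟩
    · have := TGAux.eV_comm θ V U
      rw [hstepUV] at this
      exact this
    · rintro d hd0 hdN ⟨hru, hrv⟩
      set gg := Nat.gcd d (t * K) with hgg
      have hggd : gg ∣ d := Nat.gcd_dvd_left _ _
      have hggpos : 0 < gg := Nat.gcd_pos_of_pos_left _ hd0
      have hggle : gg ≤ d := Nat.le_of_dvd hd0 hggd
      have hggK : gg ∣ K := by
        rw [hKdef]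
        exact Nat.dvd_factorial hggpos (by omega)
      have hUrot : U.rotate gg = U := by
        have h := TGAux.rotate_gcd d (t * K) hru
          (by rw [← hUlen]; exact List.rotate_length U)
        rwa [← hgg] at h
      have hVrot : V.rotate gg = V := by
        have h := TGAux.rotate_gcd d (t * K) hrv
          (by rw [← hVlen]; exact List.rotate_length V)
        rwa [← hgg] at h
      obtain ⟨c, hc⟩ := hggK
      have hUK : U.rotate K = U := by
        have h := TGAux.rotate_mul hUrot c
        rwa [← hc] at h
      have hVK : V.rotate K = V := by
        have h := TGAux.rotate_mul hVrot c
        rwa [← hc] at h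
      obtain ⟨k, rfl⟩ : ∃ k, t = k + 1 := ⟨t - 1, by omega⟩
      have hk1 : 1 ≤ k := by omega
      -- U side
      have hUform : U = uu k ++ TGAux.blocksDesc uu 0 k := by
        rw [hU]
        show uu (0 + k) ++ TGAux.blocksDesc uu 0 k = _
        rw [Nat.zero_add]
      have hUrotK : U.rotate K = TGAux.blocksDesc uu 0 k ++ uu k := by
        rw [hUform, List.rotate_eq_drop_append_take
            (by rw [List.length_append, hulen, TGAux.blocksDesc_length hulen]; omega),
          List.drop_left' (hulen k), List.take_left' (hulen k)]
      have hUsnoc : U = TGAux.blocksDesc uu 1 k ++ uu 0 := by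
        rw [hU]
        simpa using TGAux.blocksDesc_snoc uu k 0
      have hUeq : TGAux.blocksDesc uu 0 k ++ uu k = TGAux.blocksDesc uu 1 k ++ uu 0 :=
        hUrotK.symm.trans (hUK.trans hUsnoc)
      have hW := (List.append_inj hUeq
        (by rw [TGAux.blocksDesc_length hulen, TGAux.blocksDesc_length hulen])).1
      have hu01 : uu 0 = uu 1 := by
        have h := TGAux.blocksDesc_peel hulen k 0 hW 0 hk1
        simpa using h
      -- V side
      have hVform : V = vv 0 ++ TGAux.blocksAsc vv 1 k := by
        rw [hV]; rfl
      have hVrotK : V.rotate K = TGAux.blocksAsc vv 1 k ++ vv 0 := by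
        rw [hVform, List.rotate_eq_drop_append_take
            (by rw [List.length_append, hvlen, TGAux.blocksAsc_length hvlen]; omega),
          List.drop_left' (hvlen 0), List.take_left' (hvlen 0)]
      have hVsnoc : V = TGAux.blocksAsc vv 0 k ++ vv k := by
        rw [hV]
        simpa using TGAux.blocksAsc_snoc vv k 0
      have hVeq : TGAux.blocksAsc vv 1 k ++ vv 0 = TGAux.blocksAsc vv 0 k ++ vv k :=
        hVrotK.symm.trans (hVK.trans hVsnoc)
      have hWv := (List.append_inj hVeq
        (by rw [TGAux.blocksAsc_length hvlen, TGAux.blocksAsc_length hvlen])).1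
      have hv01 : vv 0 = vv 1 := by
        have h := TGAux.blocksAsc_peel hvlen k 0 hWv.symm 0 hk1
        simpa using h
      -- contradiction with hfix
      apply hfix
      have egu : (g x0).1.1 = uu 1 := by
        simp only [huu, Function.iterate_one]
      have egv : (g x0).2.1 = vv 1 := by
        simp only [hvv, Function.iterate_one]
      refine Prod.ext (Subtype.ext ?_) (Subtype.ext ?_)
      · rw [egu, ← hu01]
        simp only [huu, Function.iterate_zero_apply]
      · rw [egv, ← hv01]
        simp only [hvv, Function.iterate_zero_apply]
end

section
/- Let G = ℤ²/K with canonical generators g₁ = [1,0], g₂ = [0,1], and suppose σ and σ' are group-construction representations on ℓ²(G) with the same labeling functions i, j but constant scalars (α₀, β₀) and (α₀', β₀') respectively. If there is a character χ of G with α₀' = χ(g₁)α₀ and β₀' = χ(g₂)β₀, then the diagonal unitary U with entries γ_g (defined via any path from 0 to g) intertwines σ and σ': U σ(w) U* = σ'(w) for all w ∈ F_θ⁺. -/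
/-- For G = ℤ²/K, two group-construction representations with the same
labeling functions whose constant scalars differ by a character χ of G
(α₀' = χ(g₁)α₀, β₀' = χ(g₂)β₀) are intertwined by a diagonal unitary: there are
unimodular scalars γ_g with ⟨ξ_{g'}, σ'(w) ξ_g⟩ = γ_{g'} conj(γ_g) ⟨ξ_{g'}, σ(w) ξ_g⟩
for every w ∈ F_θ⁺, i.e. U σ(w) U* = σ'(w) for the diagonal unitary U ξ_g = γ_g ξ_g. -/
theorem diagonal_unitary_intertwines {m n : ℕ} (θ : Equiv.Perm (Fin m × Fin n))
    (K : AddSubgroup (ℤ × ℤ))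
    {Hsp : Type*} [NormedAddCommGroup Hsp] [InnerProductSpace ℂ Hsp] [CompleteSpace Hsp]
    (ξ : ((ℤ × ℤ) ⧸ K) → Hsp) (hon : Orthonormal ℂ ξ)
    (hspan : (Submodule.span ℂ (Set.range ξ)).topologicalClosure = ⊤)
    (g₁ g₂ : (ℤ × ℤ) ⧸ K)
    (hg₁ : g₁ = QuotientAddGroup.mk ((1, 0) : ℤ × ℤ))
    (hg₂ : g₂ = QuotientAddGroup.mk ((0, 1) : ℤ × ℤ))
    (iG : ((ℤ × ℤ) ⧸ K) → Fin m) (jG : ((ℤ × ℤ) ⧸ K) → Fin n)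
    (hcompat : ∀ g, FTheta.E θ (iG (g + g₂)) * FTheta.F θ (jG g) =
      FTheta.F θ (jG (g + g₁)) * FTheta.E θ (iG g))
    (α₀ β₀ α₀' β₀' : ℂ) (hα : ‖α₀‖ = 1) (hβ : ‖β₀‖ = 1)
    (σ σ' : FTheta θ →* (Hsp →L[ℂ] Hsp))
    (hσE : ∀ (i : Fin m) (g), σ (FTheta.E θ i) (ξ g) =
      if i = iG g then α₀ • ξ (g + g₁) else 0)
    (hσF : ∀ (j : Fin n) (g), σ (FTheta.F θ j) (ξ g) =
      if j = jG g then β₀ • ξ (g + g₂) else 0)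
    (hσ'E : ∀ (i : Fin m) (g), σ' (FTheta.E θ i) (ξ g) =
      if i = iG g then α₀' • ξ (g + g₁) else 0)
    (hσ'F : ∀ (j : Fin n) (g), σ' (FTheta.F θ j) (ξ g) =
      if j = jG g then β₀' • ξ (g + g₂) else 0)
    (χ : AddChar ((ℤ × ℤ) ⧸ K) Circle)
    (hα' : α₀' = (χ g₁ : ℂ) * α₀) (hβ' : β₀' = (χ g₂ : ℂ) * β₀) :
    ∃ γ : ((ℤ × ℤ) ⧸ K) → ℂ, (∀ g, ‖γ g‖ = 1) ∧
      ∀ (w : FTheta θ) (g g' : (ℤ × ℤ) ⧸ K),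
        (inner ℂ (ξ g') (σ' w (ξ g)) : ℂ) =
          γ g' * (starRingEnd ℂ) (γ g) * (inner ℂ (ξ g') (σ w (ξ g)) : ℂ) := by
  classical
  refine ⟨fun g => (χ g : ℂ), fun g => by simp [Circle.norm_coe], ?_⟩
  have hmulχ : ∀ a b : ((ℤ × ℤ) ⧸ K), ((χ (a + b) : ℂ)) = (χ a : ℂ) * (χ b : ℂ) := by
    intro a b
    rw [AddChar.map_add_eq_mul]
    simp
  have hgen : ∀ (a : TwoGraphGen (Fin m) (Fin n)) (g : (ℤ × ℤ) ⧸ K),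
      (σ ((conGen (twoGraphRel θ)).mk' (FreeMonoid.of a)) (ξ g) = 0 ∧
       σ' ((conGen (twoGraphRel θ)).mk' (FreeMonoid.of a)) (ξ g) = 0) ∨
      ∃ h c, σ ((conGen (twoGraphRel θ)).mk' (FreeMonoid.of a)) (ξ g) = c • ξ h ∧
        σ' ((conGen (twoGraphRel θ)).mk' (FreeMonoid.of a)) (ξ g) =
          ((χ h : ℂ) * (starRingEnd ℂ) ((χ g : ℂ)) * c) • ξ h := by
    intro a g
    cases a with
    | e i =>
      have he : ((conGen (twoGraphRel θ)).mk'
          (FreeMonoid.of (TwoGraphGen.e i : TwoGraphGen (Fin m) (Fin n)))) =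
          FTheta.E θ i := rfl
      rw [he, hσE, hσ'E]
      by_cases hi : i = iG g
      · right
        refine ⟨g + g₁, α₀, ?_, ?_⟩
        · rw [if_pos hi]
        · rw [if_pos hi, hα', hmulχ]
          have : (χ g : ℂ) * (starRingEnd ℂ) ((χ g : ℂ)) = 1 := by
            rw [Complex.mul_conj]
            norm_cast
            simp [Complex.normSq_eq_norm_sq, Circle.norm_coe]
          rw [show (χ g : ℂ) * (χ g₁ : ℂ) * (starRingEnd ℂ) ((χ g : ℂ)) * α₀ =
            ((χ g : ℂ) * (starRingEnd ℂ) ((χ g : ℂ))) * ((χ g₁ : ℂ) * α₀) by ring, this,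
            one_mul]
      · left
        rw [if_neg hi, if_neg hi]
        exact ⟨rfl, rfl⟩
    | f j =>
      have hf : ((conGen (twoGraphRel θ)).mk'
          (FreeMonoid.of (TwoGraphGen.f j : TwoGraphGen (Fin m) (Fin n)))) =
          FTheta.F θ j := rfl
      rw [hf, hσF, hσ'F]
      by_cases hj : j = jG g
      · right
        refine ⟨g + g₂, β₀, ?_, ?_⟩
        · rw [if_pos hj]
        · rw [if_pos hj, hβ', hmulχ]
          have : (χ g : ℂ) * (starRingEnd ℂ) ((χ g : ℂ)) = 1 := by
            rw [Complex.mul_conj]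
            norm_cast
            simp [Complex.normSq_eq_norm_sq, Circle.norm_coe]
          rw [show (χ g : ℂ) * (χ g₂ : ℂ) * (starRingEnd ℂ) ((χ g : ℂ)) * β₀ =
            ((χ g : ℂ) * (starRingEnd ℂ) ((χ g : ℂ))) * ((χ g₂ : ℂ) * β₀) by ring, this,
            one_mul]
      · left
        rw [if_neg hj, if_neg hj]
        exact ⟨rfl, rfl⟩
  have key : ∀ (w : FTheta θ) (g : (ℤ × ℤ) ⧸ K),
      (σ w (ξ g) = 0 ∧ σ' w (ξ g) = 0) ∨
      ∃ h c, σ w (ξ g) = c • ξ h ∧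
        σ' w (ξ g) = ((χ h : ℂ) * (starRingEnd ℂ) ((χ g : ℂ)) * c) • ξ h := by
    intro w
    induction w using Con.induction_on with
    | H x =>
      induction x with
      | one =>
        intro g
        right
        refine ⟨g, 1, ?_, ?_⟩
        · rw [Con.coe_one]
          change σ (1 : FTheta θ) (ξ g) = _
          rw [map_one]
          simp
        · rw [Con.coe_one]
          change σ' (1 : FTheta θ) (ξ g) = _
          rw [map_one]
          have : (χ g : ℂ) * (starRingEnd ℂ) ((χ g : ℂ)) = 1 := by
            rw [Complex.mul_conj]
            norm_cast
            simp [Complex.normSq_eq_norm_sq, Circle.norm_coe]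
          simp [this]
      | of a =>
        intro g
        exact hgen a g
      | mul x y ihx ihy =>
        intro g
        have hm : ∀ (τ : FTheta θ →* (Hsp →L[ℂ] Hsp)) (a b : (conGen (twoGraphRel θ)).Quotient)
            (v : Hsp), τ (@HMul.hMul (conGen (twoGraphRel θ)).Quotient _ _ _ a b) v = τ a (τ b v) :=
          fun τ a b v => congrArg (fun T => T v) (τ.map_mul a b)
        rw [Con.coe_mul]
        erw [hm σ, hm σ']
        rcases ihy g with ⟨hz, hz'⟩ | ⟨h, c, hc, hc'⟩
        · left
          rw [hz, hz', map_zero, map_zero]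
          exact ⟨rfl, rfl⟩
        · rw [hc, hc', map_smul, map_smul]
          rcases ihx h with ⟨hz, hz'⟩ | ⟨h2, c2, hc2, hc2'⟩
          · left
            rw [hz, hz', smul_zero, smul_zero]
            exact ⟨rfl, rfl⟩
          · right
            refine ⟨h2, c * c2, ?_, ?_⟩
            · rw [hc2, smul_smul]
            · rw [hc2', smul_smul]
              have hχh : (χ h : ℂ) * (starRingEnd ℂ) ((χ h : ℂ)) = 1 := by
                rw [Complex.mul_conj]
                norm_cast
                simp [Complex.normSq_eq_norm_sq, Circle.norm_coe]
              rw [show (χ h : ℂ) * (starRingEnd ℂ) ((χ g : ℂ)) * c *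
                  ((χ h2 : ℂ) * (starRingEnd ℂ) ((χ h : ℂ)) * c2) =
                  ((χ h : ℂ) * (starRingEnd ℂ) ((χ h : ℂ))) *
                  ((χ h2 : ℂ) * (starRingEnd ℂ) ((χ g : ℂ)) * (c * c2)) by ring, hχh,
                one_mul]
  intro w g g'
  rcases key w g with ⟨hz, hz'⟩ | ⟨h, c, hc, hc'⟩
  · simp [hz, hz']
  · rw [hc, hc', inner_smul_right, inner_smul_right]
    rw [orthonormal_iff_ite] at hon
    rw [hon]
    by_cases hgh : g' = h
    · simp only [if_pos hgh, mul_one]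
      subst hgh
      ring
    · simp [if_neg hgh]
end

section
/- Let G be a countable abelian group with designated generators g₁, g₂, and let σ be a group-construction representation of F_θ⁺ on ℓ²(G) whose symmetry group H = { h ∈ G : i(g+h)=i(g), j(g+h)=j(g) ∀g } is trivial. Then the weak-* closed algebra (von Neumann algebra) generated by σ(F_θ⁺) contains all rank-one operators ξ_g ξ_{g'}^* for g, g' ∈ G; in particular σ is an irreducible representation. -/
open scoped InnerProductSpace ComplexConjugate Pointwise

section Aux
variable {G : Type*} {Hsp : Type*} [NormedAddCommGroup Hsp] [InnerProductSpace ℂ Hsp]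
  [CompleteSpace Hsp]

lemma aux_ext (ξ : G → Hsp)
    (hspan : (Submodule.span ℂ (Set.range ξ)).topologicalClosure = ⊤)
    {v w : Hsp} (h : ∀ g, ⟪ξ g, v⟫_ℂ = ⟪ξ g, w⟫_ℂ) : v = w := by
  rw [← sub_eq_zero]
  have hbot : (Submodule.span ℂ (Set.range ξ))ᗮ = ⊥ :=
    Submodule.topologicalClosure_eq_top_iff.mp hspan
  have hmem : v - w ∈ (Submodule.span ℂ (Set.range ξ))ᗮ := by
    rw [Submodule.mem_orthogonal]
    intro u hu
    induction hu using Submodule.span_induction with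
    | mem x hx => obtain ⟨g, rfl⟩ := hx; rw [inner_sub_right, h g, sub_self]
    | zero => simp
    | add x y _ _ hx hy => rw [inner_add_left, hx, hy, add_zero]
    | smul c x _ hx => rw [inner_smul_left, hx, mul_zero]
  rw [hbot] at hmem
  simpa using hmem

variable [AddCommGroup G]

lemma aux_adjoint (ξ : G → Hsp) (hon : Orthonormal ℂ ξ)
    (hspan : (Submodule.span ℂ (Set.range ξ)).topologicalClosure = ⊤)
    (A : Hsp →L[ℂ] Hsp) (α : ℂ) (S : G → Prop) [DecidablePred S] (a : G)
    (hA : ∀ g, A (ξ g) = if S g then α • ξ (g + a) else 0) (g : G) :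
    (ContinuousLinearMap.adjoint A) (ξ g)
      = if S (g - a) then (conj α) • ξ (g - a) else 0 := by
  classical
  apply aux_ext ξ hspan
  intro p
  rw [ContinuousLinearMap.adjoint_inner_right, hA]
  have hip := orthonormal_iff_ite.mp hon
  by_cases hp : p = g - a
  · subst hp
    have hrw : g - a + a = g := by abel
    rw [hrw]
    split_ifs with hS
    · rw [inner_smul_left, inner_smul_right, hip, hip, if_pos rfl, if_pos rfl]
    · simp
  · have hpa : p + a ≠ g := fun hh => hp (eq_sub_iff_add_eq.mpr hh)
    split_ifs with h1 h2 <;>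
      simp [inner_smul_left, inner_smul_right, hip, hpa, hp]

lemma aux_step (ξ : G → Hsp) (hon : Orthonormal ℂ ξ)
    (hspan : (Submodule.span ℂ (Set.range ξ)).topologicalClosure = ⊤)
    (A : Hsp →L[ℂ] Hsp) (α : ℂ) (hαu : conj α * α = 1)
    (S : G → Prop) [DecidablePred S] (a : G)
    (hA : ∀ g, A (ξ g) = if S g then α • ξ (g + a) else 0)
    (T : Hsp →L[ℂ] Hsp) (h1 : T ∘L A = A ∘L T)
    (h2 : T ∘L ContinuousLinearMap.adjoint A = ContinuousLinearMap.adjoint A ∘L T)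
    (p q : G) (hSp : S p) :
    (S q → ⟪ξ p, T (ξ q)⟫_ℂ = ⟪ξ (p + a), T (ξ (q + a))⟫_ℂ) ∧
    (¬ S q → ⟪ξ p, T (ξ q)⟫_ℂ = 0 ∧ ⟪ξ (p + a), T (ξ (q + a))⟫_ℂ = 0) := by
  classical
  have hadj := aux_adjoint ξ hon hspan A α S a hA
  have hAp : A (ξ p) = α • ξ (p + a) := by rw [hA, if_pos hSp]
  have hApa : (ContinuousLinearMap.adjoint A) (ξ (p + a)) = conj α • ξ p := by
    rw [hadj, add_sub_cancel_right, if_pos hSp]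
  have hc1 : ∀ x, T (A x) = A (T x) := fun x => by
    have := ContinuousLinearMap.ext_iff.mp h1 x
    simpa using this
  have hc2 : ∀ x, T ((ContinuousLinearMap.adjoint A) x)
      = (ContinuousLinearMap.adjoint A) (T x) := fun x => by
    have := ContinuousLinearMap.ext_iff.mp h2 x
    simpa using this
  have hAAp : (ContinuousLinearMap.adjoint A) (A (ξ p)) = ξ p := by
    rw [hAp, map_smul, hApa, smul_smul, mul_comm, hαu, one_smul]
  constructor
  · intro hSq
    have hAq : A (ξ q) = α • ξ (q + a) := by rw [hA, if_pos hSq]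
    calc ⟪ξ p, T (ξ q)⟫_ℂ
        = ⟪(ContinuousLinearMap.adjoint A) (A (ξ p)), T (ξ q)⟫_ℂ := by rw [hAAp]
      _ = ⟪A (ξ p), A (T (ξ q))⟫_ℂ := by rw [ContinuousLinearMap.adjoint_inner_left]
      _ = ⟪A (ξ p), T (A (ξ q))⟫_ℂ := by rw [hc1]
      _ = (conj α * α) * ⟪ξ (p + a), T (ξ (q + a))⟫_ℂ := by
          rw [hAp, hAq, map_smul, inner_smul_left, inner_smul_right]; ring
      _ = ⟪ξ (p + a), T (ξ (q + a))⟫_ℂ := by rw [hαu, one_mul]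
  · intro hSq
    have hAq0 : A (ξ q) = 0 := by rw [hA, if_neg hSq]
    have hAqa0 : (ContinuousLinearMap.adjoint A) (ξ (q + a)) = 0 := by
      rw [hadj, add_sub_cancel_right, if_neg hSq]
    constructor
    · calc ⟪ξ p, T (ξ q)⟫_ℂ
          = ⟪(ContinuousLinearMap.adjoint A) (A (ξ p)), T (ξ q)⟫_ℂ := by rw [hAAp]
        _ = ⟪A (ξ p), A (T (ξ q))⟫_ℂ := by rw [ContinuousLinearMap.adjoint_inner_left]
        _ = ⟪A (ξ p), T (A (ξ q))⟫_ℂ := by rw [hc1]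
        _ = 0 := by rw [hAq0, map_zero, inner_zero_right]
    · have hAApa : A ((ContinuousLinearMap.adjoint A) (ξ (p + a))) = ξ (p + a) := by
        rw [hApa, map_smul, hAp, smul_smul, hαu, one_smul]
      calc ⟪ξ (p + a), T (ξ (q + a))⟫_ℂ
          = ⟪A ((ContinuousLinearMap.adjoint A) (ξ (p + a))), T (ξ (q + a))⟫_ℂ := by
            rw [hAApa]
        _ = ⟪(ContinuousLinearMap.adjoint A) (ξ (p + a)),
              (ContinuousLinearMap.adjoint A) (T (ξ (q + a)))⟫_ℂ := by
            rw [← ContinuousLinearMap.adjoint_inner_right]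
        _ = ⟪(ContinuousLinearMap.adjoint A) (ξ (p + a)),
              T ((ContinuousLinearMap.adjoint A) (ξ (q + a)))⟫_ℂ := by rw [hc2]
        _ = 0 := by rw [hAqa0, map_zero, inner_zero_right]

end Aux

theorem trivial_symmetry_irreducible_KEY {m n : ℕ} (θ : Equiv.Perm (Fin m × Fin n))
    {G : Type*} [AddCommGroup G] [Countable G] (g₁ g₂ : G)
    (hgen : AddSubgroup.closure ({g₁, g₂} : Set G) = ⊤)
    {Hsp : Type*} [NormedAddCommGroup Hsp] [InnerProductSpace ℂ Hsp] [CompleteSpace Hsp]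
    (ξ : G → Hsp) (hon : Orthonormal ℂ ξ)
    (hspan : (Submodule.span ℂ (Set.range ξ)).topologicalClosure = ⊤)
    (iG : G → Fin m) (jG : G → Fin n)
    (α₀ β₀ : ℂ) (hα : ‖α₀‖ = 1) (hβ : ‖β₀‖ = 1)
    (σ : FTheta θ →* (Hsp →L[ℂ] Hsp))
    (hσE : ∀ (i : Fin m) (g), σ (FTheta.E θ i) (ξ g) =
      if i = iG g then α₀ • ξ (g + g₁) else 0)
    (hσF : ∀ (j : Fin n) (g), σ (FTheta.F θ j) (ξ g) =
      if j = jG g then β₀ • ξ (g + g₂) else 0)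
    (htrivial : ∀ h : G, h ≠ 0 → ∃ g : G, iG (g + h) ≠ iG g ∨ jG (g + h) ≠ jG g)
    (T : Hsp →L[ℂ] Hsp)
    (hT1 : ∀ w : FTheta θ, T ∘L σ w = σ w ∘L T)
    (hT2 : ∀ w : FTheta θ, T ∘L ContinuousLinearMap.adjoint (σ w) =
        ContinuousLinearMap.adjoint (σ w) ∘L T) :
    ∃ c : ℂ, T = c • ContinuousLinearMap.id ℂ Hsp := by
  classical
  have hαu : conj α₀ * α₀ = 1 := by
    have := RCLike.conj_mul α₀
    rw [hα] at this; simpa using this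
  have hβu : conj β₀ * β₀ = 1 := by
    have := RCLike.conj_mul β₀
    rw [hβ] at this; simpa using this
  -- step lemmas for the two generator families
  have L1 : ∀ h p : G,
      (iG p = iG (p + h) →
        ⟪ξ p, T (ξ (p + h))⟫_ℂ = ⟪ξ (p + g₁), T (ξ ((p + g₁) + h))⟫_ℂ) ∧
      (iG p ≠ iG (p + h) →
        ⟪ξ p, T (ξ (p + h))⟫_ℂ = 0 ∧ ⟪ξ (p + g₁), T (ξ ((p + g₁) + h))⟫_ℂ = 0) := by
    intro h p
    have hst := aux_step ξ hon hspan (σ (FTheta.E θ (iG p))) α₀ hαu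
      (fun g => iG p = iG g) g₁ (fun g => hσE (iG p) g) T (hT1 _) (hT2 _) p (p + h) rfl
    rw [add_right_comm p h g₁] at hst
    exact hst
  have L2 : ∀ h p : G,
      (jG p = jG (p + h) →
        ⟪ξ p, T (ξ (p + h))⟫_ℂ = ⟪ξ (p + g₂), T (ξ ((p + g₂) + h))⟫_ℂ) ∧
      (jG p ≠ jG (p + h) →
        ⟪ξ p, T (ξ (p + h))⟫_ℂ = 0 ∧ ⟪ξ (p + g₂), T (ξ ((p + g₂) + h))⟫_ℂ = 0) := by
    intro h p
    have hst := aux_step ξ hon hspan (σ (FTheta.F θ (jG p))) β₀ hβu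
      (fun g => jG p = jG g) g₂ (fun g => hσF (jG p) g) T (hT1 _) (hT2 _) p (p + h) rfl
    rw [add_right_comm p h g₂] at hst
    exact hst
  -- propagation along lists of ±g₁, ±g₂
  have prop : ∀ h : G, ∀ l : List G,
      (∀ x ∈ l, x = g₁ ∨ x = g₂ ∨ x = -g₁ ∨ x = -g₂) →
      ∀ p : G, ⟪ξ p, T (ξ (p + h))⟫_ℂ ≠ 0 →
      ⟪ξ (p + l.sum), T (ξ ((p + l.sum) + h))⟫_ℂ = ⟪ξ p, T (ξ (p + h))⟫_ℂ := by
    intro h l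
    induction l with
    | nil => intro _ p _; simp
    | cons x l ih =>
      intro hmem p hne
      have hx := hmem x List.mem_cons_self
      have hstep : ⟪ξ (p + x), T (ξ ((p + x) + h))⟫_ℂ = ⟪ξ p, T (ξ (p + h))⟫_ℂ := by
        rcases hx with rfl | rfl | rfl | rfl
        · by_cases hc : iG p = iG (p + h)
          · exact ((L1 h p).1 hc).symm
          · exact absurd ((L1 h p).2 hc).1 hne
        · by_cases hc : jG p = jG (p + h)
          · exact ((L2 h p).1 hc).symm
          · exact absurd ((L2 h p).2 hc).1 hne
        · by_cases hc : iG (p + -g₁) = iG ((p + -g₁) + h)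
          · have h' := (L1 h (p + -g₁)).1 hc
            rw [neg_add_cancel_right] at h'
            exact h'
          · have h' := (L1 h (p + -g₁)).2 hc
            rw [neg_add_cancel_right] at h'
            exact absurd h'.2 hne
        · by_cases hc : jG (p + -g₂) = jG ((p + -g₂) + h)
          · have h' := (L2 h (p + -g₂)).1 hc
            rw [neg_add_cancel_right] at h'
            exact h'
          · have h' := (L2 h (p + -g₂)).2 hc
            rw [neg_add_cancel_right] at h'
            exact absurd h'.2 hne
      have hsum : p + (x :: l).sum = (p + x) + l.sum := by
        rw [List.sum_cons, ← add_assoc]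
      rw [hsum, ih (fun y hy => hmem y (List.mem_cons_of_mem x hy)) (p + x)
        (by rw [hstep]; exact hne), hstep]
  -- every group element is a sum of ±g₁, ±g₂
  have getlist : ∀ d : G, ∃ l : List G,
      (∀ x ∈ l, x = g₁ ∨ x = g₂ ∨ x = -g₁ ∨ x = -g₂) ∧ l.sum = d := by
    intro d
    have hd : d ∈ AddSubgroup.closure ({g₁, g₂} : Set G) := by rw [hgen]; trivial
    have hd2 : d ∈ (AddSubgroup.closure ({g₁, g₂} : Set G)).toAddSubmonoid := hd
    rw [AddSubgroup.closure_toAddSubmonoid] at hd2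
    obtain ⟨l, hl, hsum⟩ := AddSubmonoid.exists_list_of_mem_closure hd2
    refine ⟨l, ?_, hsum⟩
    intro x hx
    rcases hl x hx with hx' | hx'
    · rcases hx' with rfl | hx'
      · exact Or.inl rfl
      · exact Or.inr (Or.inl hx')
    · rw [Set.mem_neg] at hx'
      rcases hx' with hx' | hx'
      · exact Or.inr (Or.inr (Or.inl (neg_eq_iff_eq_neg.mp hx')))
      · rw [Set.mem_singleton_iff] at hx'
        exact Or.inr (Or.inr (Or.inr (neg_eq_iff_eq_neg.mp hx')))
  -- off-diagonal entries vanish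
  have offdiag : ∀ h : G, h ≠ 0 → ∀ p : G, ⟪ξ p, T (ξ (p + h))⟫_ℂ = 0 := by
    intro h hh p
    by_contra hne
    obtain ⟨g₀, hg₀⟩ := htrivial h hh
    obtain ⟨l, hl, hsum⟩ := getlist (g₀ - p)
    have hp := prop h l hl p hne
    rw [hsum] at hp
    have hpg : p + (g₀ - p) = g₀ := by abel
    rw [hpg] at hp
    rcases hg₀ with hg | hg
    · have h0 := ((L1 h g₀).2 (fun e => hg e.symm)).1
      rw [h0] at hp
      exact hne hp.symm
    · have h0 := ((L2 h g₀).2 (fun e => hg e.symm)).1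
      rw [h0] at hp
      exact hne hp.symm
  -- diagonal entries are constant
  have diag : ∀ p : G, ⟪ξ p, T (ξ p)⟫_ℂ = ⟪ξ 0, T (ξ 0)⟫_ℂ := by
    intro p
    by_cases h0 : ⟪ξ (0 : G), T (ξ 0)⟫_ℂ = 0
    · by_contra hne
      have hne' : ⟪ξ p, T (ξ (p + 0))⟫_ℂ ≠ 0 := by
        rw [add_zero]
        intro h'; exact hne (by rw [h', h0])
      obtain ⟨l, hl, hsum⟩ := getlist (-p)
      have hp := prop 0 l hl p hne'
      rw [hsum] at hp
      simp only [add_neg_cancel, add_zero] at hp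
      rw [add_zero] at hne'
      exact hne' (hp.symm.trans h0)
    · obtain ⟨l, hl, hsum⟩ := getlist p
      have hne0 : ⟪ξ (0 : G), T (ξ ((0 : G) + 0))⟫_ℂ ≠ 0 := by rwa [add_zero]
      have hp := prop 0 l hl 0 hne0
      rw [hsum] at hp
      simp only [zero_add, add_zero] at hp
      exact hp
  refine ⟨⟪ξ (0 : G), T (ξ 0)⟫_ℂ, ?_⟩
  have hTξ : ∀ g : G, T (ξ g) = ⟪ξ (0 : G), T (ξ 0)⟫_ℂ • ξ g := by
    intro g
    apply aux_ext ξ hspan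
    intro p
    rw [inner_smul_right]
    have hip := orthonormal_iff_ite.mp hon
    by_cases hpg : p = g
    · subst hpg
      rw [diag p, hip, if_pos rfl, mul_one]
    · have hd : g - p ≠ 0 := sub_ne_zero.mpr (fun e => hpg e.symm)
      have h0 := offdiag (g - p) hd p
      have hpg' : p + (g - p) = g := by abel
      rw [hpg'] at h0
      rw [h0, hip, if_neg hpg, mul_zero]
  apply ContinuousLinearMap.ext_on
    (Submodule.dense_iff_topologicalClosure_eq_top.mpr hspan)
  rintro x ⟨g, rfl⟩
  rw [hTξ g]
  simp

/-- A group-construction representation with trivial symmetry group is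
irreducible: every operator in the commutant of {σ(w), σ(w)* : w ∈ F_θ⁺} commutes with
all rank-one operators ξ_g ξ_{g'}* (i.e. the von Neumann algebra generated by σ(F_θ⁺)
contains them), and is a scalar multiple of the identity. -/
theorem trivial_symmetry_irreducible {m n : ℕ} (θ : Equiv.Perm (Fin m × Fin n))
    {G : Type*} [AddCommGroup G] [Countable G] (g₁ g₂ : G)
    (hgen : AddSubgroup.closure ({g₁, g₂} : Set G) = ⊤)
    {Hsp : Type*} [NormedAddCommGroup Hsp] [InnerProductSpace ℂ Hsp] [CompleteSpace Hsp]
    (ξ : G → Hsp) (hon : Orthonormal ℂ ξ)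
    (hspan : (Submodule.span ℂ (Set.range ξ)).topologicalClosure = ⊤)
    (iG : G → Fin m) (jG : G → Fin n)
    (hcompat : ∀ g, FTheta.E θ (iG (g + g₂)) * FTheta.F θ (jG g) =
      FTheta.F θ (jG (g + g₁)) * FTheta.E θ (iG g))
    (α₀ β₀ : ℂ) (hα : ‖α₀‖ = 1) (hβ : ‖β₀‖ = 1)
    (σ : FTheta θ →* (Hsp →L[ℂ] Hsp))
    (hσE : ∀ (i : Fin m) (g), σ (FTheta.E θ i) (ξ g) =
      if i = iG g then α₀ • ξ (g + g₁) else 0)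
    (hσF : ∀ (j : Fin n) (g), σ (FTheta.F θ j) (ξ g) =
      if j = jG g then β₀ • ξ (g + g₂) else 0)
    (htrivial : ∀ h : G, h ≠ 0 → ∃ g : G, iG (g + h) ≠ iG g ∨ jG (g + h) ≠ jG g) :
    (∀ g g' : G, ∀ T : Hsp →L[ℂ] Hsp,
      (∀ w : FTheta θ, T ∘L σ w = σ w ∘L T) →
      (∀ w : FTheta θ, T ∘L ContinuousLinearMap.adjoint (σ w) =
        ContinuousLinearMap.adjoint (σ w) ∘L T) →
      T ∘L ((innerSL ℂ (ξ g')).smulRight (ξ g)) =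
        ((innerSL ℂ (ξ g')).smulRight (ξ g)) ∘L T) ∧
    (∀ T : Hsp →L[ℂ] Hsp,
      (∀ w : FTheta θ, T ∘L σ w = σ w ∘L T) →
      (∀ w : FTheta θ, T ∘L ContinuousLinearMap.adjoint (σ w) =
        ContinuousLinearMap.adjoint (σ w) ∘L T) →
      ∃ c : ℂ, T = c • ContinuousLinearMap.id ℂ Hsp) := by
  have key := fun T hT1 hT2 => trivial_symmetry_irreducible_KEY θ g₁ g₂ hgen ξ hon hspan
    iG jG α₀ β₀ hα hβ σ hσE hσF htrivial T hT1 hT2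
  refine ⟨?_, key⟩
  intro g g' T hT1 hT2
  obtain ⟨c, rfl⟩ := key T hT1 hT2
  ext x
  simp
end
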